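/- arXiv:2205.10443 — 5 statements merged into one kernel-verified Lean document; each statement's English description precedes it below -/
import Mathlib

section
/- Let G be a Lie group that is a union of fewer than 𝔠 compact subsets, and let φ : G → S be a continuous bijective group homomorphism onto a group S that is a (possibly infinite) product of compact connected Lie groups. Then G is compact. -/
open Set Pointwise Cardinal Topology

section TopAux

private lemma interior_union_empty' {X : Type*} [TopologicalSpace X] {A B : Set X}
    (hA : IsClosed A) (hAi : interior A = ∅) (hBi : interior B = ∅) :
    interior (A ∪ B) = ∅ := by
  have h2 : interior (A ∪ B) ∩ Aᶜ ⊆ interior B :=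
    interior_maximal (fun x hx => (interior_subset hx.1).resolve_left hx.2)
      (isOpen_interior.inter hA.isOpen_compl)
  have h3 : interior (A ∪ B) ⊆ A := by
    intro x hx
    by_contra hxA
    have := h2 ⟨hx, hxA⟩
    rw [hBi] at this
    exact this
  have h4 := interior_maximal h3 isOpen_interior
  rw [hAi] at h4
  exact eq_empty_iff_forall_notMem.2 fun x hx => h4 hx

private lemma interior_biUnion_empty' {X : Type*} [TopologicalSpace X] {ι : Type*}
    (t : Finset ι) (f : ι → Set X) (hc : ∀ i ∈ t, IsClosed (f i))
    (hi : ∀ i ∈ t, interior (f i) = ∅) : interior (⋃ i ∈ t, f i) = ∅ := by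
  classical
  induction t using Finset.induction_on with
  | empty => simp
  | @insert a s ha ih =>
    rw [Finset.set_biUnion_insert]
    exact interior_union_empty' (hc a (Finset.mem_insert_self a s))
      (hi a (Finset.mem_insert_self a s))
      (ih (fun i hi' => hc i (Finset.mem_insert_of_mem hi'))
        (fun i hi' => hi i (Finset.mem_insert_of_mem hi')))

end TopAux

section Core

variable {H : Type*} [Group H] [TopologicalSpace H] [IsTopologicalGroup H]

private lemma smul_interior_empty {N : Set H} (hNi : interior N = ∅) (c : H) :
    interior (c • N) = ∅ := by
  by_contra h
  obtain ⟨z, hz⟩ := nonempty_iff_ne_empty.2 h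
  have hsub : c⁻¹ • interior (c • N) ⊆ interior N := by
    apply interior_maximal ?_ (isOpen_interior.smul c⁻¹)
    calc c⁻¹ • interior (c • N) ⊆ c⁻¹ • (c • N) := Set.smul_set_mono interior_subset
      _ = N := inv_smul_smul c N
  have hmem : c⁻¹ • z ∈ c⁻¹ • interior (c • N) := Set.smul_mem_smul_set hz
  have := hsub hmem
  rw [hNi] at this
  exact this

private lemma inv_interior_empty {N : Set H} (hNi : interior N = ∅) :
    interior N⁻¹ = ∅ := by
  by_contra h
  obtain ⟨z, hz⟩ := nonempty_iff_ne_empty.2 h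
  have hsub : (interior N⁻¹)⁻¹ ⊆ interior N := by
    apply interior_maximal ?_ isOpen_interior.inv
    intro w hw
    rw [Set.mem_inv] at hw
    have := interior_subset hw
    rwa [Set.mem_inv, inv_inv] at this
  have hmem : z⁻¹ ∈ (interior N⁻¹)⁻¹ := Set.inv_mem_inv.2 hz
  have := hsub hmem
  rw [hNi] at this
  exact this

private lemma greedy {T : Type*} [Fintype T] [DecidableEq T]
    (V : T → Set H) (hVo : ∀ s, IsOpen (V s)) (hVne : ∀ s, (V s).Nonempty)
    {N : Set H} (hNc : IsClosed N) (hNi : interior N = ∅)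
    (hNs : ∀ x : H, x ∈ N → x⁻¹ ∈ N) :
    ∃ p : T → H, (∀ s, p s ∈ V s) ∧ ∀ s t, s ≠ t → (p s)⁻¹ * p t ∉ N := by
  classical
  suffices hA : ∀ A : Finset T, ∃ p : T → H, (∀ s, p s ∈ V s) ∧
      ∀ s ∈ A, ∀ t ∈ A, s ≠ t → (p s)⁻¹ * p t ∉ N by
    obtain ⟨p, h1, h2⟩ := hA Finset.univ
    exact ⟨p, h1, fun s t hst => h2 s (Finset.mem_univ s) t (Finset.mem_univ t) hst⟩
  intro A
  induction A using Finset.induction_on with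
  | empty =>
    exact ⟨fun s => (hVne s).choose, fun s => (hVne s).choose_spec, by simp⟩
  | @insert a A ha ih =>
    obtain ⟨p, hp1, hp2⟩ := ih
    have hUi : interior (⋃ t ∈ A, p t • N) = ∅ :=
      interior_biUnion_empty' A _ (fun i _ => hNc.smul (p i))
        (fun i _ => smul_interior_empty hNi (p i))
    have hex : ∃ z ∈ V a, z ∉ ⋃ t ∈ A, p t • N := by
      by_contra h
      push_neg at h
      have hsub := interior_maximal h (hVo a)
      rw [hUi] at hsub
      obtain ⟨z, hz⟩ := hVne a
      exact hsub hz
    obtain ⟨pa, hpaV, hpaU⟩ := hex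
    have key : ∀ t ∈ A, (p t)⁻¹ * pa ∉ N := by
      intro t ht hmem
      exact hpaU (mem_biUnion ht (by rwa [mem_smul_set_iff_inv_smul_mem, smul_eq_mul]))
    refine ⟨Function.update p a pa, ?_, ?_⟩
    · intro s
      rcases eq_or_ne s a with rfl | hs
      · rw [Function.update_self]; exact hpaV
      · rw [Function.update_of_ne hs]; exact hp1 s
    · intro s hs t ht hst
      rcases Finset.mem_insert.1 hs with rfl | hsA
      · rcases Finset.mem_insert.1 ht with rfl | htA
        · exact absurd rfl hst
        · rw [Function.update_self, Function.update_of_ne (ne_of_mem_of_not_mem htA ha)]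
          intro hmem
          exact key t htA (by simpa [mul_inv_rev] using hNs _ hmem)
      · rcases Finset.mem_insert.1 ht with rfl | htA
        · rw [Function.update_of_ne (ne_of_mem_of_not_mem hsA ha), Function.update_self]
          exact key s hsA
        · rw [Function.update_of_ne (ne_of_mem_of_not_mem hsA ha),
            Function.update_of_ne (ne_of_mem_of_not_mem htA ha)]
          exact hp2 s hsA t htA hst

private lemma scheme_step (m : ℕ) {N' : Set H} (hN'c : IsClosed N') (hN'i : interior N' = ∅)
    (hN's : ∀ x : H, x ∈ N' → x⁻¹ ∈ N') (f : (ℕ → Bool) → Set H)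
    (hfo : ∀ b, IsOpen (f b)) (hfne : ∀ b, (f b).Nonempty)
    (hfcons : ∀ b b', (∀ i, i < m → b i = b' i) → f b = f b') :
    ∃ g : (ℕ → Bool) → Set H, (∀ b, IsOpen (g b)) ∧ (∀ b, (g b).Nonempty) ∧
      (∀ b b', (∀ i, i < m + 1 → b i = b' i) → g b = g b') ∧
      (∀ b, closure (g b) ⊆ f b) ∧
      (∀ b b', (∃ i, i < m + 1 ∧ b i ≠ b' i) →
        ∀ x ∈ closure (g b), ∀ y ∈ closure (g b'), x⁻¹ * y ∉ N') := by
  classical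
  set ext : (Fin (m + 1) → Bool) → (ℕ → Bool) :=
    fun s i => if h : i < m + 1 then s ⟨i, h⟩ else false with hext
  obtain ⟨p, hp1, hp2⟩ := greedy (fun s => f (ext s)) (fun s => hfo _) (fun s => hfne _)
    hN'c hN'i hN's
  have hbox : ∀ s t : Fin (m + 1) → Bool, ∃ P Q : Set H, IsOpen P ∧ IsOpen Q ∧
      p s ∈ P ∧ p t ∈ Q ∧ (s ≠ t → ∀ a ∈ P, ∀ b ∈ Q, a⁻¹ * b ∉ N') := by
    intro s t
    rcases eq_or_ne s t with rfl | hst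
    · exact ⟨univ, univ, isOpen_univ, isOpen_univ, mem_univ _, mem_univ _,
        fun h => absurd rfl h⟩
    · have hO : IsOpen ((fun q : H × H => q.1⁻¹ * q.2) ⁻¹' N'ᶜ) :=
        hN'c.isOpen_compl.preimage (continuous_fst.inv.mul continuous_snd)
      obtain ⟨P, Q, hP, hQ, hps, hpt, hPQ⟩ :=
        isOpen_prod_iff.1 hO (p s) (p t) (hp2 s t hst)
      exact ⟨P, Q, hP, hQ, hps, hpt, fun _ a haP b hbQ => hPQ (Set.mk_mem_prod haP hbQ)⟩
  choose P Q hPo hQo hPmem hQmem hPQ using hbox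
  set g0 : (Fin (m + 1) → Bool) → Set H :=
    fun s => f (ext s) ∩ ⋂ t, (P s t ∩ Q t s) with hg0
  have hg0o : ∀ s, IsOpen (g0 s) := fun s =>
    (hfo _).inter (isOpen_iInter_of_finite fun t => (hPo s t).inter (hQo t s))
  have hg0mem : ∀ s, p s ∈ g0 s := fun s =>
    ⟨hp1 s, mem_iInter.2 fun t => ⟨hPmem s t, hQmem t s⟩⟩
  have hshrink : ∀ s, ∃ Vs : Set H, IsOpen Vs ∧ p s ∈ Vs ∧ closure Vs ⊆ g0 s := by
    intro s
    obtain ⟨t0, ht0, ht0c, ht0s⟩ :=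
      exists_mem_nhds_isClosed_subset ((hg0o s).mem_nhds (hg0mem s))
    exact ⟨interior t0, isOpen_interior, mem_interior_iff_mem_nhds.2 ht0,
      (closure_minimal interior_subset ht0c).trans ht0s⟩
  choose g1 hg1o hg1mem hg1cl using hshrink
  set restr : (ℕ → Bool) → (Fin (m + 1) → Bool) := fun b i => b i with hrestr
  have hext_restr : ∀ b : ℕ → Bool, ∀ i, i < m + 1 → ext (restr b) i = b i := by
    intro b i hi
    simp [hext, hrestr, hi, Nat.lt_succ_iff.mp hi]
  refine ⟨fun b => g1 (restr b), fun b => hg1o _, fun b => ⟨p _, hg1mem _⟩, ?_, ?_, ?_⟩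
  · intro b b' hbb'
    have h : restr b = restr b' := funext fun i => hbb' i i.2
    show g1 (restr b) = g1 (restr b')
    rw [h]
  · intro b z hz
    have h1 := hg1cl (restr b) hz
    have h2 : z ∈ f (ext (restr b)) := h1.1
    rwa [hfcons (ext (restr b)) b
      (fun i hi => hext_restr b i (Nat.lt_succ_of_lt hi))] at h2
  · rintro b b' ⟨i, hi, hne⟩ x hx y hy
    have hst : restr b ≠ restr b' := by
      intro h
      exact hne (by simpa [hrestr] using congrFun h ⟨i, hi⟩)
    have hxP : x ∈ P (restr b) (restr b') :=
      ((mem_iInter.1 ((hg1cl (restr b)) hx).2) (restr b')).1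
    have hyQ : y ∈ Q (restr b) (restr b') :=
      ((mem_iInter.1 ((hg1cl (restr b')) hy).2) (restr b)).2
    exact hPQ (restr b) (restr b') hst x hxP y hyQ

private lemma core_cantor [CompactSpace H] [T2Space H] (F : ℕ → Set H)
    (hFc : ∀ n, IsClosed (F n)) (hFi : ∀ n, interior (F n) = ∅)
    (hsing : interior ({1} : Set H) = ∅) :
    ∃ x : (ℕ → Bool) → H, ∀ b b' : ℕ → Bool, b ≠ b' → ∀ n, (x b)⁻¹ * x b' ∉ F n := by
  classical
  set Nm : ℕ → Set H := fun m => ⋃ k ∈ Finset.range (m + 1), ({1} ∪ F k ∪ (F k)⁻¹)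
    with hNmdef
  have hNc : ∀ m, IsClosed (Nm m) :=
    fun m => isClosed_biUnion_finset fun k _ =>
      ((isClosed_singleton.union (hFc k)).union (hFc k).inv)
  have hNi : ∀ m, interior (Nm m) = ∅ := by
    intro m
    apply interior_biUnion_empty'
    · exact fun k _ => (isClosed_singleton.union (hFc k)).union (hFc k).inv
    · intro k _
      exact interior_union_empty' (isClosed_singleton.union (hFc k))
        (interior_union_empty' isClosed_singleton hsing (hFi k))
        (inv_interior_empty (hFi k))
  have hNs : ∀ m, ∀ x : H, x ∈ Nm m → x⁻¹ ∈ Nm m := by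
    intro m x hx
    rw [hNmdef, mem_iUnion₂] at hx ⊢
    obtain ⟨k, hk, hxk⟩ := hx
    refine ⟨k, hk, ?_⟩
    rcases hxk with (h1 | h2) | h3
    · rw [mem_singleton_iff] at h1
      exact Or.inl (Or.inl (by simp [h1]))
    · exact Or.inr (Set.inv_mem_inv.2 h2)
    · rw [Set.mem_inv] at h3
      exact Or.inl (Or.inr (by simpa using h3))
  have hNF : ∀ n m, n ≤ m → F n ⊆ Nm m := by
    intro n m hnm x hx
    rw [hNmdef, mem_iUnion₂]
    exact ⟨n, Finset.mem_range.2 (Nat.lt_succ_of_le hnm), Or.inl (Or.inr hx)⟩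
  set SInv : ℕ → ((ℕ → Bool) → Set H) → Prop := fun m f =>
    (∀ b, IsOpen (f b)) ∧ (∀ b, (f b).Nonempty) ∧
    (∀ b b', (∀ i, i < m → b i = b' i) → f b = f b') ∧
    (∀ b b', (∃ i, i < m ∧ b i ≠ b' i) →
      ∀ x ∈ closure (f b), ∀ y ∈ closure (f b'), x⁻¹ * y ∉ Nm m) with hSInv
  have hstep : ∀ m f, SInv m f → ∃ g, SInv (m + 1) g ∧ ∀ b, closure (g b) ⊆ f b := by
    intro m f hf
    obtain ⟨g, h1, h2, h3, h4, h5⟩ :=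
      scheme_step m (hNc (m + 1)) (hNi (m + 1)) (hNs (m + 1)) f hf.1 hf.2.1 hf.2.2.1
    exact ⟨g, ⟨h1, h2, h3, h5⟩, h4⟩
  have hbase : SInv 0 (fun _ => (univ : Set H)) := by
    refine ⟨fun _ => isOpen_univ, fun _ => ⟨1, mem_univ 1⟩, fun _ _ _ => rfl, ?_⟩
    rintro b b' ⟨i, hi, -⟩
    exact absurd hi (Nat.not_lt_zero i)
  let u : (m : ℕ) → {f : (ℕ → Bool) → Set H // SInv m f} :=
    fun m => Nat.rec ⟨fun _ => univ, hbase⟩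
      (fun m prev => ⟨(hstep m prev.1 prev.2).choose,
        (hstep m prev.1 prev.2).choose_spec.1⟩) m
  have hlink : ∀ m, ∀ b, closure ((u (m + 1)).1 b) ⊆ (u m).1 b :=
    fun m => (hstep m (u m).1 (u m).2).choose_spec.2
  have hbranch : ∀ b : ℕ → Bool, ∃ z : H, ∀ m, z ∈ closure ((u m).1 b) := by
    intro b
    have hne : (⋂ m, closure ((u m).1 b)).Nonempty := by
      apply IsCompact.nonempty_iInter_of_sequence_nonempty_isCompact_isClosed
      · exact fun m => (hlink m b).trans subset_closure
      · exact fun m => ((u m).2.2.1 b).mono subset_closure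
      · exact isClosed_closure.isCompact
      · exact fun m => isClosed_closure
    obtain ⟨z, hz⟩ := hne
    exact ⟨z, fun m => mem_iInter.1 hz m⟩
  choose x hx using hbranch
  refine ⟨x, ?_⟩
  intro b b' hbb' n hmem
  obtain ⟨i, hi⟩ := Function.ne_iff.1 hbb'
  have him : i < max (i + 1) n := lt_of_lt_of_le (Nat.lt_succ_self i) (le_max_left _ _)
  have hnm : n ≤ max (i + 1) n := le_max_right _ _
  exact (u (max (i + 1) n)).2.2.2.2 b b' ⟨i, him, hi⟩ (x b) (hx b _) (x b') (hx b' _)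
    (hNF n _ hnm hmem)

end Core

section T2Aux

private lemma t2space_of_charted_group {E M : Type*} [TopologicalSpace E] [T2Space E]
    [TopologicalSpace M] [ChartedSpace E M] [Group M] [IsTopologicalGroup M] :
    T2Space M := by
  haveI : T0Space M := by
    rw [t0Space_iff_inseparable]
    intro x y hxy
    set c := chartAt E x with hc
    have hxs : x ∈ c.source := mem_chart_source E x
    have hys : y ∈ c.source := by
      have h1 : c.source ∈ 𝓝 x := c.open_source.mem_nhds hxs
      have h2 : c.source ∈ 𝓝 y := by rwa [← hxy.nhds_eq]
      exact mem_of_mem_nhds h2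
    by_cases hcc : c x = c y
    · exact c.injOn hxs hys hcc
    · obtain ⟨A, B, hA, hB, hcA, hcB, hAB⟩ := t2_separation hcc
      have hopen : IsOpen (c.source ∩ c ⁻¹' A) :=
        c.continuousOn.isOpen_inter_preimage c.open_source hA
      have hPx : c.source ∩ c ⁻¹' A ∈ 𝓝 x := hopen.mem_nhds ⟨hxs, hcA⟩
      have hy' : y ∈ c.source ∩ c ⁻¹' A := mem_of_mem_nhds (by rwa [← hxy.nhds_eq])
      have : c y ∈ A ∩ B := ⟨hy'.2, hcB⟩
      rw [Set.disjoint_iff_inter_eq_empty.1 hAB] at this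
      exact absurd this (notMem_empty _)
  infer_instance

end T2Aux

/-- `X` is a union of fewer than `𝔠` compact subsets. -/
def SigmaCompactLtContinuum (X : Type*) [TopologicalSpace X] : Prop :=
  ∃ 𝒦 : Set (Set X), Cardinal.mk 𝒦 < Cardinal.continuum ∧
    (∀ K ∈ 𝒦, IsCompact K) ∧ ⋃₀ 𝒦 = Set.univ

theorem compact_of_bijective_to_product_of_compact_lie
    {E : Type*} [NormedAddCommGroup E] [NormedSpace ℝ E] [FiniteDimensional ℝ E]
    {G : Type*} [TopologicalSpace G] [ChartedSpace E G] [Group G]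
    [IsTopologicalGroup G] [LieGroup (modelWithCornersSelf ℝ E) (⊤ : ℕ∞) G]
    {ι : Type*} {F : ι → Type*}
    [∀ i, NormedAddCommGroup (F i)] [∀ i, NormedSpace ℝ (F i)]
    [∀ i, FiniteDimensional ℝ (F i)]
    {S : ι → Type*} [∀ i, TopologicalSpace (S i)] [∀ i, ChartedSpace (F i) (S i)]
    [∀ i, Group (S i)] [∀ i, IsTopologicalGroup (S i)]
    [∀ i, LieGroup (modelWithCornersSelf ℝ (F i)) (⊤ : ℕ∞) (S i)]
    [∀ i, CompactSpace (S i)] [∀ i, ConnectedSpace (S i)]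
    (hG : SigmaCompactLtContinuum G)
    (φ : G →* (∀ i, S i)) (hcont : Continuous φ) (hbij : Function.Bijective φ) :
    CompactSpace G := by
  classical
  obtain ⟨𝒦, h𝒦card, h𝒦comp, h𝒦cover⟩ := hG
  haveI : LocallyCompactSpace G := ChartedSpace.locallyCompactSpace E G
  haveI hT2i : ∀ i, T2Space (S i) := fun i => t2space_of_charted_group (E := F i)
  haveI : T2Space (∀ i, S i) := inferInstance
  -- a compact symmetric neighborhood of 1 and the open subgroup it generates
  obtain ⟨C, hCcomp, hCmem⟩ := exists_compact_mem_nhds (1 : G)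
  have h1C : (1 : G) ∈ C := mem_of_mem_nhds hCmem
  set W : Set G := C * C⁻¹ with hWdef
  have h1Cinv : (1 : G) ∈ C⁻¹ := by rw [Set.mem_inv]; simpa using h1C
  have h1W : (1 : G) ∈ W := by simpa using Set.mul_mem_mul h1C h1Cinv
  have hCW : C ⊆ W := fun x hx => by simpa using Set.mul_mem_mul hx h1Cinv
  have hWcomp : IsCompact W := hCcomp.mul hCcomp.inv
  have hWsymm : W⁻¹ = W := by rw [hWdef, mul_inv_rev, inv_inv]
  have hWmem : W ∈ 𝓝 (1 : G) := Filter.mem_of_superset hCmem hCW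
  have hWpow_comp : ∀ n, IsCompact (W ^ n) := by
    intro n
    induction n with
    | zero => simp [pow_zero, ← Set.singleton_one, isCompact_singleton]
    | succ n ih => rw [pow_succ]; exact ih.mul hWcomp
  have hWpow_symm : ∀ n, (W ^ n)⁻¹ = W ^ n := by
    intro n
    rw [← inv_pow, hWsymm]
  set Usub : Subgroup G :=
    { carrier := ⋃ n, W ^ n
      one_mem' := mem_iUnion.2 ⟨0, by simp [pow_zero, ← Set.singleton_one]⟩
      mul_mem' := by
        intro a b ha hb
        obtain ⟨ma, hma⟩ := mem_iUnion.1 ha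
        obtain ⟨mb, hmb⟩ := mem_iUnion.1 hb
        exact mem_iUnion.2 ⟨ma + mb, by rw [pow_add]; exact Set.mul_mem_mul hma hmb⟩
      inv_mem' := by
        intro a ha
        obtain ⟨n, hn⟩ := mem_iUnion.1 ha
        exact mem_iUnion.2 ⟨n, by rw [← hWpow_symm n]; exact Set.inv_mem_inv.2 hn⟩ }
    with hUsubdef
  have hUopen : IsOpen (Usub : Set G) := by
    apply Subgroup.isOpen_of_mem_nhds
    apply Filter.mem_of_superset hWmem
    intro x hx
    exact mem_iUnion.2 ⟨1, by simpa [pow_one] using hx⟩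
  -- the quotient G ⧸ Usub has fewer than continuum many elements
  have hquot : #(G ⧸ Usub) < Cardinal.continuum := by
    have hKfin : ∀ K ∈ 𝒦, ((fun g : G => (g : G ⧸ Usub)) '' K).Finite := by
      intro K hK
      have hcover : K ⊆ ⋃ x ∈ K, x • (Usub : Set G) := by
        intro x hx
        refine mem_biUnion hx ?_
        rw [mem_smul_set_iff_inv_smul_mem, smul_eq_mul, inv_mul_cancel]
        exact Usub.one_mem
      obtain ⟨t, hts, htfin, htcover⟩ := (h𝒦comp K hK).elim_finite_subcover_image
        (fun x _ => hUopen.smul x) hcover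
      refine Set.Finite.subset (htfin.image (fun x : G => (x : G ⧸ Usub))) ?_
      rintro _ ⟨y, hyK, rfl⟩
      obtain ⟨x, hxt, hyx⟩ := mem_iUnion₂.1 (htcover hyK)
      refine ⟨x, hxt, ?_⟩
      rw [mem_smul_set_iff_inv_smul_mem, smul_eq_mul] at hyx
      exact QuotientGroup.eq.2 hyx
    have huniv : (univ : Set (G ⧸ Usub)) = ⋃ K ∈ 𝒦, (fun g : G => (g : G ⧸ Usub)) '' K := by
      apply Subset.antisymm
      · intro z _
        obtain ⟨g, rfl⟩ := QuotientGroup.mk_surjective z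
        have hg : g ∈ ⋃₀ 𝒦 := h𝒦cover ▸ mem_univ g
        obtain ⟨K, hK, hgK⟩ := hg
        exact mem_biUnion hK ⟨g, hgK, rfl⟩
      · exact fun z _ => mem_univ z
    have hK1 : Nonempty 𝒦 := by
      have h1 : (1 : G) ∈ ⋃₀ 𝒦 := h𝒦cover ▸ mem_univ 1
      obtain ⟨K, hK, _⟩ := h1
      exact ⟨⟨K, hK⟩⟩
    calc #(G ⧸ Usub) = #(univ : Set (G ⧸ Usub)) := mk_univ.symm
      _ = #(⋃ K ∈ 𝒦, (fun g : G => (g : G ⧸ Usub)) '' K) := by rw [huniv]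
      _ ≤ #𝒦 * ⨆ K : 𝒦, #((fun g : G => (g : G ⧸ Usub)) '' (K : Set G)) :=
          mk_biUnion_le _ _
      _ ≤ #𝒦 * ℵ₀ := by
          apply mul_le_mul_right
          exact ciSup_le' fun K => ((hKfin K K.2).lt_aleph0).le
      _ < Cardinal.continuum :=
          Cardinal.mul_lt_of_lt Cardinal.aleph0_le_continuum h𝒦card
            Cardinal.aleph0_lt_continuum
  set Fs : ℕ → Set (∀ i, S i) := fun n => φ '' (W ^ n) with hFsdef
  by_cases hFint : ∃ n, (interior (Fs n)).Nonempty
  · -- some image has nonempty interior: G is compact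
    obtain ⟨n, o₀, ho₀⟩ := hFint
    have hcover : (univ : Set (∀ i, S i)) ⊆ ⋃ s : (∀ i, S i), s • interior (Fs n) := by
      intro t _
      refine mem_iUnion.2 ⟨t * o₀⁻¹, ?_⟩
      rw [mem_smul_set_iff_inv_smul_mem, smul_eq_mul]
      have : (t * o₀⁻¹)⁻¹ * t = o₀ := by group
      rwa [this]
    obtain ⟨t, htcover⟩ := isCompact_univ.elim_finite_subcover
      (fun s : (∀ i, S i) => s • interior (Fs n)) (fun s => isOpen_interior.smul s) hcover
    choose ginv hginv using hbij.2
    set K' : Set G := ⋃ s ∈ t, ginv s • (W ^ n) with hK'def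
    have hK'comp : IsCompact K' :=
      t.finite_toSet.isCompact_biUnion fun s _ => (hWpow_comp n).smul (ginv s)
    have hK'univ : (univ : Set G) ⊆ K' := by
      intro g _
      have hφg : φ g ∈ ⋃ s ∈ t, s • interior (Fs n) := htcover (mem_univ _)
      obtain ⟨s, hst, hgs⟩ := mem_iUnion₂.1 hφg
      have hgs' : s⁻¹ * φ g ∈ Fs n := by
        rw [mem_smul_set_iff_inv_smul_mem, smul_eq_mul] at hgs
        exact interior_subset hgs
      obtain ⟨w, hw, hφw⟩ := hgs'
      have heq : φ (ginv s * w) = φ g := by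
        rw [map_mul, hginv, hφw, mul_inv_cancel_left]
      have hg : g = ginv s * w := (hbij.1 heq).symm
      refine mem_biUnion hst ?_
      rw [hg]
      exact Set.smul_mem_smul_set hw
    have hKu : K' = Set.univ := eq_univ_of_univ_subset hK'univ
    rw [hKu] at hK'comp
    exact isCompact_univ_iff.1 hK'comp
  · -- all images are nowhere dense: contradiction via the Cantor scheme
    exfalso
    push_neg at hFint
    have hFi : ∀ n, interior (Fs n) = ∅ := hFint
    have hFc : ∀ n, IsClosed (Fs n) := fun n => ((hWpow_comp n).image hcont).isClosed
    have hsing : interior ({1} : Set (∀ i, S i)) = ∅ := by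
      by_contra h
      have h' : (interior ({1} : Set (∀ i, S i))).Nonempty := nonempty_iff_ne_empty.2 h
      have hop : IsOpen ({1} : Set (∀ i, S i)) := by
        have heq : interior ({1} : Set (∀ i, S i)) = {1} := by
          apply Subset.antisymm interior_subset
          obtain ⟨z, hz⟩ := h'
          have hz1 : z = 1 := mem_singleton_iff.1 (interior_subset hz)
          intro w hw
          rw [mem_singleton_iff] at hw
          rw [hz1] at hz
          rw [hw]
          exact hz
        rw [← heq]
        exact isOpen_interior
      have h1F : (1 : ∀ i, S i) ∈ Fs 1 := ⟨1, by simpa [pow_one] using h1W, map_one φ⟩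
      have hsub : ({1} : Set (∀ i, S i)) ⊆ interior (Fs 1) :=
        interior_maximal (singleton_subset_iff.2 h1F) hop
      rw [hFi 1] at hsub
      exact notMem_empty _ (hsub rfl)
    obtain ⟨x, hx⟩ := core_cantor Fs hFc hFi hsing
    set ψ := Equiv.ofBijective φ hbij with hψdef
    have hψap : ∀ z, φ (ψ.symm z) = z := fun z => Equiv.ofBijective_apply_symm_apply φ hbij z
    have hinj : Function.Injective
        (fun b : ULift (ℕ → Bool) => ((ψ.symm (x b.down) : G) : G ⧸ Usub)) := by
      intro b b' h
      by_contra hne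
      have hdne : b.down ≠ b'.down := fun hdd => hne (ULift.ext _ _ hdd)
      have hmem : (ψ.symm (x b.down))⁻¹ * ψ.symm (x b'.down) ∈ Usub := QuotientGroup.eq.1 h
      have hmem' : (ψ.symm (x b.down))⁻¹ * ψ.symm (x b'.down) ∈ ⋃ n, W ^ n := hmem
      obtain ⟨n, hn⟩ := mem_iUnion.1 hmem'
      apply hx b.down b'.down hdne n
      refine ⟨_, hn, ?_⟩
      rw [map_mul, map_inv, hψap, hψap]
    have hle : Cardinal.continuum ≤ #(G ⧸ Usub) := by
      have hcard2 : #(ULift.{_} (ℕ → Bool)) = Cardinal.continuum := by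
        rw [Cardinal.mk_uLift]
        have : #(ℕ → Bool) = Cardinal.continuum := by
          rw [Cardinal.mk_arrow, Cardinal.mk_bool, Cardinal.mk_nat]
          simp [Cardinal.two_power_aleph0]
        rw [this, Cardinal.lift_continuum]
      calc Cardinal.continuum = #(ULift.{_} (ℕ → Bool)) := hcard2.symm
        _ ≤ #(G ⧸ Usub) := Cardinal.mk_le_of_injective hinj
    exact absurd hle hquot.not_ge
end

section
/- Let G be a Lie group that is a union of fewer than 𝔠 compact subsets, and let φ : G → H be a continuous bijective group homomorphism onto a compact Hausdorff group H. Then G is compact. -/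
open Set Pointwise


section Aux
variable {H : Type*} [TopologicalSpace H] [Group H] [IsTopologicalGroup H]

lemma myNwdUnion {A B : Set H} (hA : IsClosed A) (hiA : interior A = ∅)
    (hiB : interior B = ∅) : interior (A ∪ B) = ∅ := by
  have h1 : interior (A ∪ B) \ A ⊆ interior B := by
    apply interior_maximal
    · intro x hx
      rcases (interior_subset hx.1 : x ∈ A ∪ B) with h | h
      · exact absurd h hx.2
      · exact h
    · exact isOpen_interior.sdiff hA
  rw [hiB] at h1
  have h2 : interior (A ∪ B) ⊆ interior A := by
    apply interior_maximal _ isOpen_interior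
    intro x hx
    by_contra hxA
    exact h1 ⟨hx, hxA⟩
  rw [hiA] at h2
  exact Set.eq_empty_of_subset_empty h2

lemma myNwdBiUnion {ι : Type*} (s : Finset ι) (f : ι → Set H)
    (hcl : ∀ i, IsClosed (f i)) (hint : ∀ i, interior (f i) = ∅) :
    interior (⋃ i ∈ s, f i) = ∅ := by
  classical
  induction s using Finset.induction_on with
  | empty => simp
  | @insert a s ha ih =>
    rw [Finset.set_biUnion_insert]
    exact myNwdUnion (hcl a) (hint a) ih

lemma myPts {ι : Type*} (F : Set H) (hFc : IsClosed F) (hFnwd : interior F = ∅)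
    (U : ι → Set H) (hUo : ∀ i, IsOpen (U i)) (hUne : ∀ i, (U i).Nonempty)
    (s : Finset ι) :
    ∃ x : ι → H, (∀ i ∈ s, x i ∈ U i) ∧
      ∀ i ∈ s, ∀ j ∈ s, i ≠ j → (x i)⁻¹ * x j ∉ F := by
  classical
  induction s using Finset.induction_on with
  | empty => exact ⟨fun i => (hUne i).choose, by simp, by simp⟩
  | @insert a s ha ih =>
    obtain ⟨x, hx1, hx2⟩ := ih
    set B : Set H := ⋃ j ∈ s, ((x j • F) ∪ (x j • F⁻¹)) with hB
    have hBi : interior B = ∅ := by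
      apply myNwdBiUnion
      · intro j
        exact (hFc.smul (x j)).union ((hFc.inv).smul (x j))
      · intro j
        apply myNwdUnion (hFc.smul (x j))
        · rw [interior_smul, hFnwd, Set.smul_set_empty]
        · have hinv : interior (F⁻¹) = (interior F)⁻¹ := by
            have h := (Homeomorph.inv H).image_interior F
            simpa [Set.image_inv] using h.symm
          rw [interior_smul, hinv, hFnwd]
          simp
    have hUB : ¬ (U a ⊆ B) := by
      intro hsub
      have := interior_maximal hsub (hUo a)
      rw [hBi] at this
      exact (hUne a).ne_empty (Set.eq_empty_of_subset_empty this)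
    obtain ⟨xa, hxaU, hxaB⟩ := Set.not_subset.mp hUB
    refine ⟨Function.update x a xa, ?_, ?_⟩
    · intro i hi
      rcases Finset.mem_insert.mp hi with rfl | hi2
      · rw [Function.update_self]; exact hxaU
      · rw [Function.update_of_ne (by rintro rfl; exact ha hi2)]; exact hx1 i hi2
    · intro i hi j hj hij
      have hmem : ∀ k ∈ s, xa ∉ x k • F ∧ xa ∉ x k • F⁻¹ := by
        intro k hk
        constructor <;> intro hc <;>
          exact hxaB (Set.mem_biUnion hk (by first | exact Or.inl hc | exact Or.inr hc))
      rcases Finset.mem_insert.mp hi with rfl | hi' <;>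
        rcases Finset.mem_insert.mp hj with rfl | hj'
      · exact absurd rfl hij
      · -- i = a, j ∈ s
        rw [Function.update_self, Function.update_of_ne (by rintro rfl; exact ha hj')]
        intro hc
        apply (hmem j hj').2
        rw [Set.mem_smul_set_iff_inv_smul_mem, smul_eq_mul, Set.mem_inv]
        simpa using hc
      · -- j = a, i ∈ s
        rw [Function.update_self, Function.update_of_ne (by rintro rfl; exact ha hi')]
        intro hc
        apply (hmem i hi').1
        rw [Set.mem_smul_set_iff_inv_smul_mem, smul_eq_mul]
        exact hc
      · rw [Function.update_of_ne (by rintro rfl; exact ha hi'),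
          Function.update_of_ne (by rintro rfl; exact ha hj')]
        exact hx2 i hi' j hj' hij
end Aux

section Aux2
variable {H : Type*} [TopologicalSpace H] [Group H] [IsTopologicalGroup H]

lemma myStep {ι : Type*} [Finite ι] (F : Set H) (hFc : IsClosed F)
    (hFnwd : interior F = ∅) (U : ι → Set H) (hUo : ∀ i, IsOpen (U i))
    (hUne : ∀ i, (U i).Nonempty) :
    ∃ V : ι → Set H, (∀ i, IsOpen (V i)) ∧ (∀ i, (V i).Nonempty) ∧
      (∀ i, closure (V i) ⊆ U i) ∧
      ∀ i j, i ≠ j → ∀ x ∈ closure (V i), ∀ y ∈ closure (V j), x⁻¹ * y ∉ F := by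
  classical
  cases nonempty_fintype ι
  obtain ⟨x, hx1, hx2⟩ := (by exact myPts F hFc hFnwd U hUo hUne Finset.univ :
    ∃ x : ι → H, (∀ i ∈ Finset.univ, x i ∈ U i) ∧
      ∀ i ∈ Finset.univ, ∀ j ∈ Finset.univ, i ≠ j → (x i)⁻¹ * x j ∉ F)
  simp only [Finset.mem_univ, true_implies, forall_true_left] at hx1 hx2
  have key : ∀ i j : ι, ∃ u v : Set H, u ∈ nhds (x i) ∧ v ∈ nhds (x j) ∧
      (i ≠ j → ∀ a ∈ u, ∀ b ∈ v, a⁻¹ * b ∉ F) := by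
    intro i j
    by_cases hij : i = j
    · exact ⟨univ, univ, Filter.univ_mem, Filter.univ_mem, fun h => absurd hij h⟩
    · have hF : Fᶜ ∈ nhds ((x i)⁻¹ * x j) :=
        hFc.isOpen_compl.mem_nhds (hx2 i j hij)
      have hcont : ContinuousAt (fun p : H × H => p.1⁻¹ * p.2) (x i, x j) := by
        fun_prop
      obtain ⟨u, hu, v, hv, huv⟩ := mem_nhds_prod_iff.mp (hcont.preimage_mem_nhds hF)
      exact ⟨u, v, hu, hv, fun _ a ha b hb => huv (Set.mk_mem_prod ha hb)⟩
  choose u v hu hv hkey using key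
  have hN : ∀ i, (U i ∩ ((⋂ j, u i j) ∩ ⋂ j, v j i)) ∈ nhds (x i) := fun i =>
    Filter.inter_mem ((hUo i).mem_nhds (hx1 i))
      (Filter.inter_mem (Filter.iInter_mem.mpr fun j => hu i j)
        (Filter.iInter_mem.mpr fun j => hv j i))
  have hreg : ∀ i, ∃ t, t ∈ nhds (x i) ∧ IsClosed t ∧
      t ⊆ U i ∩ ((⋂ j, u i j) ∩ ⋂ j, v j i) := fun i =>
    exists_mem_nhds_isClosed_subset (hN i)
  choose t ht htc hts using hreg
  have hcl : ∀ i, closure (interior (t i)) ⊆ t i := fun i =>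
    closure_minimal interior_subset (htc i)
  refine ⟨fun i => interior (t i), fun i => isOpen_interior,
    fun i => ⟨x i, mem_interior_iff_mem_nhds.mpr (ht i)⟩,
    fun i => (hcl i).trans ((hts i).trans (Set.inter_subset_left)),
    fun i j hij a ha b hb => ?_⟩
  have hati : a ∈ u i j := by
    have := ((hts i) (hcl i ha)).2.1
    exact Set.mem_iInter.mp this j
  have hbtj : b ∈ v i j := by
    have := ((hts j) (hcl j hb)).2.2
    exact Set.mem_iInter.mp this i
  exact hkey i j hij a hati b hbtj

end Aux2
section Aux3
variable {H : Type*} [TopologicalSpace H] [Group H] [IsTopologicalGroup H]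

lemma myExistsLevel (C : ℕ → Set H) (hCc : ∀ n, IsClosed (C n))
    (hCnwd : ∀ n, interior (C n) = ∅) (n : ℕ) (f : (Fin n → Bool) → Set H)
    (hfo : ∀ s, IsOpen (f s)) (hfn : ∀ s, (f s).Nonempty) :
    ∃ g : (Fin (n+1) → Bool) → Set H, (∀ s, IsOpen (g s)) ∧ (∀ s, (g s).Nonempty) ∧
      (∀ s, closure (g s) ⊆ f (Fin.init s)) ∧
      (∀ s t, s ≠ t → ∀ x ∈ closure (g s), ∀ y ∈ closure (g t),
        ∀ k, k ≤ n → x⁻¹ * y ∉ C k) := by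
  classical
  set F := ⋃ k ∈ Finset.range (n+1), C k with hF
  have hFc : IsClosed F :=
    Set.Finite.isClosed_biUnion (Finset.range (n+1)).finite_toSet fun k _ => hCc k
  have hFnwd : interior F = ∅ := myNwdBiUnion _ C hCc hCnwd
  obtain ⟨V, h1, h2, h3, h4⟩ := myStep (ι := Fin (n+1) → Bool) F hFc hFnwd (fun s => f (Fin.init s))
    (fun s => hfo _) (fun s => hfn _)
  refine ⟨V, h1, h2, h3, fun s t hst x hx y hy k hk hmem => ?_⟩
  exact h4 s t hst x hx y hy
    (Set.mem_biUnion (Finset.mem_range.mpr (Nat.lt_succ_of_le hk)) hmem)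

noncomputable def myChain (C : ℕ → Set H) (hCc : ∀ n, IsClosed (C n))
    (hCnwd : ∀ n, interior (C n) = ∅) :
    (n : ℕ) → {f : (Fin n → Bool) → Set H // (∀ s, IsOpen (f s)) ∧ ∀ s, (f s).Nonempty}
  | 0 => ⟨fun _ => Set.univ, fun _ => isOpen_univ, fun _ => Set.univ_nonempty⟩
  | (n+1) =>
    ⟨(myExistsLevel C hCc hCnwd n (myChain C hCc hCnwd n).1
        (myChain C hCc hCnwd n).2.1 (myChain C hCc hCnwd n).2.2).choose,
      (myExistsLevel C hCc hCnwd n (myChain C hCc hCnwd n).1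
        (myChain C hCc hCnwd n).2.1 (myChain C hCc hCnwd n).2.2).choose_spec.1,
      (myExistsLevel C hCc hCnwd n (myChain C hCc hCnwd n).1
        (myChain C hCc hCnwd n).2.1 (myChain C hCc hCnwd n).2.2).choose_spec.2.1⟩

lemma myChain_spec (C : ℕ → Set H) (hCc : ∀ n, IsClosed (C n))
    (hCnwd : ∀ n, interior (C n) = ∅) (n : ℕ) :
    (∀ s, closure ((myChain C hCc hCnwd (n+1)).1 s) ⊆
        (myChain C hCc hCnwd n).1 (Fin.init s)) ∧
      (∀ s t, s ≠ t → ∀ x ∈ closure ((myChain C hCc hCnwd (n+1)).1 s),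
        ∀ y ∈ closure ((myChain C hCc hCnwd (n+1)).1 t), ∀ k, k ≤ n → x⁻¹ * y ∉ C k) :=
  (myExistsLevel C hCc hCnwd n (myChain C hCc hCnwd n).1
    (myChain C hCc hCnwd n).2.1 (myChain C hCc hCnwd n).2.2).choose_spec.2.2

lemma myLemA [CompactSpace H] [T2Space H] (C : ℕ → Set H) (hCc : ∀ n, IsClosed (C n))
    (hCnwd : ∀ n, interior (C n) = ∅) :
    ∃ f : (ℕ → Bool) → H, ∀ α β, α ≠ β → ∀ k, (f α)⁻¹ * f β ∉ C k := by
  classical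
  set ch := myChain C hCc hCnwd with hch
  have hrestr : ∀ (n : ℕ) (α : ℕ → Bool),
      Fin.init (fun i : Fin (n+1) => α i) = fun i : Fin n => α i := by
    intro n α; funext i; simp [Fin.init]
  set g : (ℕ → Bool) → ℕ → Set H :=
    fun α n => closure ((ch n).1 (fun i : Fin n => α i)) with hg
  have hgdec : ∀ α n, g α (n+1) ⊆ g α n := by
    intro α n
    have h1 := (myChain_spec C hCc hCnwd n).1 (fun i : Fin (n+1) => α i)
    rw [hrestr n α] at h1
    exact h1.trans subset_closure
  have hgne : ∀ α n, (g α n).Nonempty := fun α n =>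
    ((ch n).2.2 _).closure
  have hgcl : ∀ α n, IsClosed (g α n) := fun α n => isClosed_closure
  have hgcp : ∀ α, IsCompact (g α 0) := fun α => (hgcl α 0).isCompact
  have hne : ∀ α, (⋂ n, g α n).Nonempty := fun α =>
    IsCompact.nonempty_iInter_of_sequence_nonempty_isCompact_isClosed
      (g α) (hgdec α) (hgne α) (hgcp α) (hgcl α)
  refine ⟨fun α => (hne α).choose, fun α β hab k => ?_⟩
  obtain ⟨m, hm⟩ : ∃ m, α m ≠ β m := by
    by_contra h
    push_neg at h
    exact hab (funext h)
  set n := max m k with hn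
  have hsne : (fun i : Fin (n+1) => α i) ≠ (fun i : Fin (n+1) => β i) := by
    intro h
    have := congrFun h ⟨m, Nat.lt_succ_of_le (le_max_left m k)⟩
    exact hm this
  have hα : (hne α).choose ∈ g α (n+1) := Set.mem_iInter.mp (hne α).choose_spec (n+1)
  have hβ : (hne β).choose ∈ g β (n+1) := Set.mem_iInter.mp (hne β).choose_spec (n+1)
  exact (myChain_spec C hCc hCnwd n).2 _ _ hsne _ hα _ hβ k (le_max_right m k)

end Aux3
theorem compact_of_lie_bijective_to_compact
    {E : Type*} [NormedAddCommGroup E] [NormedSpace ℝ E] [FiniteDimensional ℝ E]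
    {G : Type*} [TopologicalSpace G] [ChartedSpace E G] [Group G]
    [IsTopologicalGroup G] [LieGroup (modelWithCornersSelf ℝ E) (⊤ : ℕ∞) G]
    {H : Type*} [TopologicalSpace H] [Group H] [IsTopologicalGroup H]
    [CompactSpace H] [T2Space H]
    (hG : SigmaCompactLtContinuum G)
    (φ : G →* H) (hcont : Continuous φ) (hbij : Function.Bijective φ) :
    CompactSpace G := by
  classical
  obtain ⟨𝒦, hcard, hcomp, hcover⟩ := hG
  haveI : LocallyCompactSpace G := ChartedSpace.locallyCompactSpace E G
  obtain ⟨V₀, hV₀c, hV₀n⟩ := exists_compact_mem_nhds (1 : G)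
  set V : Set G := V₀ ∪ V₀⁻¹ with hVdef
  have hVc : IsCompact V := hV₀c.union hV₀c.inv
  have hVsymm : V⁻¹ = V := by
    rw [hVdef]
    simp [Set.union_comm]
  have hWc : ∀ n : ℕ, IsCompact (V ^ n) := by
    intro n
    induction n with
    | zero => rw [pow_zero]; exact isCompact_singleton
    | succ n ih => rw [pow_succ]; exact ih.mul hVc
  have hWinv : ∀ n : ℕ, (V ^ n)⁻¹ = V ^ n := by
    intro n; rw [← inv_pow, hVsymm]
  set P : Subgroup G :=
    { carrier := ⋃ n, V ^ n
      one_mem' := Set.mem_iUnion.mpr ⟨0, by rw [pow_zero]; exact Set.mem_one.mpr rfl⟩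
      mul_mem' := by
        intro a b ha hb
        obtain ⟨m, hm⟩ := Set.mem_iUnion.mp ha
        obtain ⟨n, hn⟩ := Set.mem_iUnion.mp hb
        exact Set.mem_iUnion.mpr ⟨m + n, by rw [pow_add]; exact Set.mul_mem_mul hm hn⟩
      inv_mem' := by
        intro a ha
        obtain ⟨n, hn⟩ := Set.mem_iUnion.mp ha
        exact Set.mem_iUnion.mpr ⟨n, by rw [← hWinv n]; exact Set.inv_mem_inv.mpr hn⟩ }
    with hPdef
  have hPV : ∀ n, V ^ n ⊆ (P : Set G) := fun n => Set.subset_iUnion (fun n => V ^ n) n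
  have hPopen : IsOpen (P : Set G) := by
    apply Subgroup.isOpen_of_mem_nhds P
    apply Filter.mem_of_superset hV₀n
    exact (Set.subset_union_left).trans ((pow_one V) ▸ hPV 1)
  have hfib : ∀ q : G ⧸ P, IsOpen (QuotientGroup.mk ⁻¹' {q} : Set G) := by
    intro q
    obtain ⟨g, rfl⟩ := QuotientGroup.mk_surjective q
    have heq : (QuotientGroup.mk ⁻¹' {(g : G ⧸ P)} : Set G) =
        (fun x => x⁻¹ * g) ⁻¹' (P : Set G) := by
      ext x
      simp only [Set.mem_preimage, Set.mem_singleton_iff, SetLike.mem_coe]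
      exact QuotientGroup.eq
    rw [heq]
    exact hPopen.preimage (by fun_prop)
  have hfin : ∀ K ∈ 𝒦, (QuotientGroup.mk '' K : Set (G ⧸ P)).Finite := by
    intro K hK
    obtain ⟨t, ht⟩ := (hcomp K hK).elim_finite_subcover
      (fun q : G ⧸ P => QuotientGroup.mk ⁻¹' {q}) hfib
      (fun x _ => Set.mem_iUnion.mpr ⟨QuotientGroup.mk x, rfl⟩)
    apply Set.Finite.subset t.finite_toSet
    rintro q ⟨x, hxK, rfl⟩
    obtain ⟨q', hq't, hq'⟩ := Set.mem_iUnion₂.mp (ht hxK)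
    rw [show (QuotientGroup.mk x : G ⧸ P) = q' from hq']
    exact hq't
  have hne𝒦 : Nonempty 𝒦 := by
    have h1 : (1 : G) ∈ ⋃₀ 𝒦 := hcover ▸ Set.mem_univ 1
    obtain ⟨K, hK, _⟩ := h1
    exact ⟨⟨K, hK⟩⟩
  have hQcard : Cardinal.mk (G ⧸ P) < Cardinal.continuum := by
    have hcv : ⋃ K : 𝒦, (QuotientGroup.mk '' (K : Set G) : Set (G ⧸ P)) = Set.univ := by
      ext q
      simp only [Set.mem_univ, iff_true]
      obtain ⟨g, rfl⟩ := QuotientGroup.mk_surjective q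
      have hg : g ∈ ⋃₀ 𝒦 := hcover ▸ Set.mem_univ g
      obtain ⟨K, hK, hgK⟩ := hg
      exact Set.mem_iUnion.mpr ⟨⟨K, hK⟩, ⟨g, hgK, rfl⟩⟩
    have h1 : Cardinal.mk (G ⧸ P) =
        Cardinal.mk (⋃ K : 𝒦, (QuotientGroup.mk '' (K : Set G) : Set (G ⧸ P))) := by
      rw [hcv, Cardinal.mk_univ]
    rw [h1]
    have h2 := Cardinal.mk_iUnion_le
      (fun K : 𝒦 => (QuotientGroup.mk '' (K : Set G) : Set (G ⧸ P)))
    have h3 : ⨆ K : 𝒦, Cardinal.mk (QuotientGroup.mk '' (K : Set G) : Set (G ⧸ P)) ≤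
        Cardinal.aleph0 := by
      apply ciSup_le
      intro K
      exact (hfin K K.2).countable.le_aleph0
    calc Cardinal.mk (⋃ K : 𝒦, (QuotientGroup.mk '' (K : Set G) : Set (G ⧸ P)))
        ≤ Cardinal.mk 𝒦 * ⨆ K : 𝒦, Cardinal.mk
            (QuotientGroup.mk '' (K : Set G) : Set (G ⧸ P)) := h2
      _ ≤ Cardinal.mk 𝒦 * Cardinal.aleph0 := mul_le_mul_right h3 _
      _ < Cardinal.continuum := Cardinal.mul_lt_of_lt Cardinal.aleph0_le_continuum
            hcard Cardinal.aleph0_lt_continuum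
  by_cases hint : ∃ n : ℕ, (interior (φ '' (V ^ n))).Nonempty
  · obtain ⟨n, hne⟩ := hint
    set U := interior (φ '' (V ^ n)) with hUdef
    obtain ⟨u₀, hu₀⟩ := hne
    obtain ⟨c₀, hc₀V, hc₀⟩ := interior_subset hu₀
    have hcov2 : (Set.univ : Set H) ⊆ ⋃ h : H, (h * u₀⁻¹) • U := by
      intro h _
      apply Set.mem_iUnion.mpr ⟨h, ?_⟩
      rw [Set.mem_smul_set_iff_inv_smul_mem, smul_eq_mul]
      have : (h * u₀⁻¹)⁻¹ * h = u₀ := by group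
      rw [this]
      exact hu₀
    obtain ⟨t, ht⟩ := isCompact_univ.elim_finite_subcover
      (fun h : H => (h * u₀⁻¹) • U) (fun h => isOpen_interior.smul _) hcov2
    set g : H → G := fun h => (hbij.surjective h).choose with hgdef
    have hg : ∀ h, φ (g h) = h := fun h => (hbij.surjective h).choose_spec
    have hbig : (Set.univ : Set G) ⊆ ⋃ h ∈ t, (g h * c₀⁻¹) • (V ^ n) := by
      intro a _
      have hφa : φ a ∈ ⋃ h ∈ t, (h * u₀⁻¹) • U := ht (Set.mem_univ _)
      obtain ⟨h, hht, hmem⟩ := Set.mem_iUnion₂.mp hφa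
      rw [Set.mem_smul_set_iff_inv_smul_mem, smul_eq_mul] at hmem
      obtain ⟨v, hvV, hv⟩ := interior_subset hmem
      apply Set.mem_biUnion hht
      rw [Set.mem_smul_set_iff_inv_smul_mem, smul_eq_mul]
      have hkey : φ ((g h * c₀⁻¹)⁻¹ * a) = φ v := by
        rw [hv]
        simp [map_mul, map_inv, hg h, hc₀, mul_assoc]
      rw [hbij.injective hkey]
      exact hvV
    have hbigc : IsCompact (⋃ h ∈ t, (g h * c₀⁻¹) • (V ^ n)) :=
      t.finite_toSet.isCompact_biUnion (fun h _ => (hWc n).smul _)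
    exact ⟨hbigc.of_isClosed_subset isClosed_univ hbig⟩
  · exfalso
    push_neg at hint
    have hCnwd : ∀ n, interior (φ '' (V ^ n)) = ∅ := hint
    have hCcl : ∀ n : ℕ, IsClosed (φ '' (V ^ n)) := fun n =>
      ((hWc n).image hcont).isClosed
    obtain ⟨f, hf⟩ := myLemA (fun n => φ '' (V ^ n)) hCcl hCnwd
    set D : Subgroup H := P.map φ with hDdef
    have hinj : Function.Injective
        (fun α : ℕ → Bool => (QuotientGroup.mk (f α) : H ⧸ D)) := by
      intro α β hmk
      by_contra hab
      have hmem : (f α)⁻¹ * f β ∈ D := QuotientGroup.eq.mp hmk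
      obtain ⟨p, hp, hfp⟩ := Subgroup.mem_map.mp hmem
      obtain ⟨n, hn⟩ := Set.mem_iUnion.mp hp
      exact hf α β hab n ⟨p, hn, hfp⟩
    have hsurj : ∃ ψ : G ⧸ P → H ⧸ D, Function.Surjective ψ := by
      refine ⟨Quotient.map' φ ?_, ?_⟩
      · intro a b hab
        rw [QuotientGroup.leftRel_apply] at hab ⊢
        exact Subgroup.mem_map.mpr ⟨a⁻¹ * b, hab, by simp [map_mul, map_inv]⟩
      · intro q
        obtain ⟨h, rfl⟩ := QuotientGroup.mk_surjective q
        obtain ⟨a, rfl⟩ := hbij.surjective h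
        exact ⟨QuotientGroup.mk a, rfl⟩
    obtain ⟨ψ, hψ⟩ := hsurj
    set j : (ℕ → Bool) → G ⧸ P :=
      (Function.surjInv hψ) ∘ (fun α => QuotientGroup.mk (f α)) with hjdef
    have hjinj : Function.Injective j := (Function.injective_surjInv hψ).comp hinj
    have hle := Cardinal.lift_mk_le'.mpr ⟨⟨j, hjinj⟩⟩
    have h1 : Cardinal.mk (ℕ → Bool) = Cardinal.continuum := by
      rw [Cardinal.mk_arrow]
      simp [Cardinal.mk_bool, Cardinal.two_power_aleph0]
    rw [h1, Cardinal.lift_continuum, Cardinal.lift_uzero] at hle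
    exact absurd hle (not_le.mpr hQcard)
end

section
/- Let G be a locally compact Hausdorff group that is a union of fewer than 𝔠 compact subsets, and let φ : G → H be a continuous bijective group homomorphism onto a compact Hausdorff group H. Then G is compact (and hence φ is a topological isomorphism). -/
open Set Topology Pointwise
set_option linter.unusedSectionVars false

section Myc
variable {H : Type*} [TopologicalSpace H] [Group H] [IsTopologicalGroup H]
  [CompactSpace H] [T2Space H]

/-- Shrink a nonempty open set to one with closure inside it. -/
lemma reg_shrink {A : Set H} (hA : IsOpen A) (hAn : A.Nonempty) :
    ∃ U : Set H, IsOpen U ∧ U.Nonempty ∧ closure U ⊆ A := by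
  obtain ⟨a, ha⟩ := hAn
  obtain ⟨t, ht, htc, hts⟩ := exists_mem_nhds_isClosed_subset (hA.mem_nhds ha)
  exact ⟨interior t, isOpen_interior, ⟨a, mem_interior_iff_mem_nhds.2 ht⟩,
    (closure_minimal interior_subset htc).trans hts⟩

/-- Given two nonempty open sets and a closed set `F` with empty interior, we can shrink them
so that quotients of points of the (closures of the) shrunk sets avoid `F`. -/
lemma avoid_aux {F A B : Set H} (hFc : IsClosed F) (hFi : interior F = ∅)
    (hA : IsOpen A) (hAn : A.Nonempty) (hB : IsOpen B) (hBn : B.Nonempty) :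
    ∃ U V : Set H, IsOpen U ∧ U.Nonempty ∧ IsOpen V ∧ V.Nonempty ∧
      closure U ⊆ A ∧ closure V ⊆ B ∧
      ∀ a ∈ closure U, ∀ b ∈ closure V, a⁻¹ * b ∉ F := by
  have h1 : ∃ a ∈ A, ∃ b ∈ B, a⁻¹ * b ∉ F := by
    by_contra h
    push_neg at h
    obtain ⟨a, ha⟩ := hAn
    obtain ⟨b, hb⟩ := hBn
    have hsub : A⁻¹ * B ⊆ F := by
      rintro x ⟨u, hu, v, hv, rfl⟩
      simpa using h _ (Set.mem_inv.1 hu) _ hv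
    have hopen : IsOpen (A⁻¹ * B) := hB.mul_left
    have : A⁻¹ * B ⊆ interior F := hopen.subset_interior_iff.2 hsub
    rw [hFi] at this
    exact this (Set.mul_mem_mul (Set.inv_mem_inv.2 ha) hb)
  obtain ⟨a, ha, b, hb, hab⟩ := h1
  have hcont : Continuous fun p : H × H => p.1⁻¹ * p.2 :=
    (continuous_fst.inv).mul continuous_snd
  have hmem : (fun p : H × H => p.1⁻¹ * p.2) ⁻¹' Fᶜ ∈ 𝓝 (a, b) :=
    (hFc.isOpen_compl.preimage hcont).mem_nhds hab
  obtain ⟨u, v, hu, hau, hv, hbv, huv⟩ := mem_nhds_prod_iff'.1 hmem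
  obtain ⟨t, ht, htc, hts⟩ :=
    exists_mem_nhds_isClosed_subset ((hu.inter hA).mem_nhds ⟨hau, ha⟩)
  obtain ⟨t', ht', htc', hts'⟩ :=
    exists_mem_nhds_isClosed_subset ((hv.inter hB).mem_nhds ⟨hbv, hb⟩)
  refine ⟨interior t, interior t', isOpen_interior, ⟨a, mem_interior_iff_mem_nhds.2 ht⟩,
    isOpen_interior, ⟨b, mem_interior_iff_mem_nhds.2 ht'⟩,
    ((closure_minimal interior_subset htc).trans hts).trans inter_subset_right,
    ((closure_minimal interior_subset htc').trans hts').trans inter_subset_right,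
    fun x hx y hy => ?_⟩
  have hxu : x ∈ u := ((closure_minimal interior_subset htc).trans hts hx).1
  have hyv : y ∈ v := ((closure_minimal interior_subset htc').trans hts' hy).1
  exact huv (Set.mk_mem_prod hxu hyv)

/-- Simultaneous shrinking handling a finite set of avoidance requirements. -/
lemma shrink_finset {F : ℕ → Set H} (hFc : ∀ n, IsClosed (F n))
    (hFi : ∀ n, interior (F n) = ∅) {ι : Type*} [DecidableEq ι]
    (P : Finset (ι × ι × ℕ)) (hP : ∀ p ∈ P, p.1 ≠ p.2.1)
    (A : ι → Set H) (hA : ∀ i, IsOpen (A i)) (hAn : ∀ i, (A i).Nonempty) :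
    ∃ B : ι → Set H, (∀ i, IsOpen (B i)) ∧ (∀ i, (B i).Nonempty) ∧
      (∀ i, closure (B i) ⊆ A i) ∧
      ∀ p ∈ P, ∀ a ∈ closure (B p.1), ∀ b ∈ closure (B p.2.1), a⁻¹ * b ∉ F p.2.2 := by
  classical
  induction P using Finset.induction_on with
  | empty =>
    choose B hBo hBn hBc using fun i => reg_shrink (hA i) (hAn i)
    exact ⟨B, hBo, hBn, hBc, by simp⟩
  | @insert p P hpP ih =>
    obtain ⟨B, hBo, hBn, hBc, hreq⟩ := ih (fun q hq => hP q (Finset.mem_insert_of_mem hq))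
    obtain ⟨i, j, n⟩ := p
    have hij : i ≠ j := hP _ (Finset.mem_insert_self _ _)
    obtain ⟨U, V, hUo, hUn, hVo, hVn, hUc, hVc, havoid⟩ :=
      avoid_aux (A := B i) (B := B j) (hFc n) (hFi n) (hBo i) (hBn i) (hBo j) (hBn j)
    set B' : ι → Set H := Function.update (Function.update B i U) j V with hB'def
    have hB'i : B' i = U := by
      rw [hB'def, Function.update_of_ne hij, Function.update_self]
    have hB'j : B' j = V := by rw [hB'def, Function.update_self]
    have hB'sub : ∀ k, B' k ⊆ B k := by
      intro k
      rcases eq_or_ne k j with rfl | hkj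
      · rw [hB'j]; exact subset_closure.trans hVc
      rcases eq_or_ne k i with rfl | hki
      · rw [hB'i]; exact subset_closure.trans hUc
      · rw [hB'def, Function.update_of_ne hkj, Function.update_of_ne hki]
    have hB'o : ∀ k, IsOpen (B' k) := by
      intro k
      rcases eq_or_ne k j with rfl | hkj
      · rw [hB'j]; exact hVo
      rcases eq_or_ne k i with rfl | hki
      · rw [hB'i]; exact hUo
      · rw [hB'def, Function.update_of_ne hkj, Function.update_of_ne hki]; exact hBo k
    have hB'n : ∀ k, (B' k).Nonempty := by
      intro k
      rcases eq_or_ne k j with rfl | hkj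
      · rw [hB'j]; exact hVn
      rcases eq_or_ne k i with rfl | hki
      · rw [hB'i]; exact hUn
      · rw [hB'def, Function.update_of_ne hkj, Function.update_of_ne hki]; exact hBn k
    refine ⟨B', hB'o, hB'n,
      fun k => (closure_mono (hB'sub k)).trans (hBc k), ?_⟩
    intro q hq
    rcases Finset.mem_insert.1 hq with rfl | hq'
    · intro a ha b hb
      exact havoid a (by rwa [hB'i] at ha) b (by rwa [hB'j] at hb)
    · intro a ha b hb
      exact hreq q hq' a (closure_mono (hB'sub _) ha) b (closure_mono (hB'sub _) hb)

/-- A level of the Cantor scheme: a family of nonempty open sets indexed by `Fin k → Bool`,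
such that points in closures of sets at distinct indices have quotients avoiding `F n` for
`n < k`. -/
structure MycLevel (F : ℕ → Set H) (k : ℕ) where
  B : (Fin k → Bool) → Set H
  opn : ∀ s, IsOpen (B s)
  ne : ∀ s, (B s).Nonempty
  sep : ∀ s t, s ≠ t → ∀ n < k, ∀ a ∈ closure (B s), ∀ b ∈ closure (B t), a⁻¹ * b ∉ F n

lemma myc_step (F : ℕ → Set H) (hFc : ∀ n, IsClosed (F n))
    (hFi : ∀ n, interior (F n) = ∅) (k : ℕ) (L : MycLevel F k) :
    ∃ L' : MycLevel F (k + 1), ∀ s : Fin (k + 1) → Bool,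
      closure (L'.B s) ⊆ L.B (fun i => s i.castSucc) := by
  classical
  set ι := (Fin (k + 1) → Bool)
  set A : ι → Set H := fun s => L.B (fun i => s i.castSucc) with hA
  set P : Finset (ι × ι × ℕ) :=
    (Finset.univ ×ˢ Finset.univ ×ˢ Finset.range (k + 1)).filter (fun p => p.1 ≠ p.2.1) with hP
  have hPne : ∀ p ∈ P, p.1 ≠ p.2.1 := fun p hp => (Finset.mem_filter.1 hp).2
  obtain ⟨B, hBo, hBn, hBc, hreq⟩ := shrink_finset hFc hFi P hPne A
    (fun i => L.opn _) (fun i => L.ne _)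
  refine ⟨⟨B, hBo, hBn, fun s t hst n hn a ha b hb => ?_⟩, fun s => hBc s⟩
  have hmem : (s, t, n) ∈ P := by
    rw [hP, Finset.mem_filter]
    exact ⟨Finset.mem_product.2 ⟨Finset.mem_univ _,
      Finset.mem_product.2 ⟨Finset.mem_univ _, Finset.mem_range.2 hn⟩⟩, hst⟩
  exact hreq (s, t, n) hmem a ha b hb

lemma exists_myc_injection (F : ℕ → Set H) (hFc : ∀ n, IsClosed (F n))
    (hFi : ∀ n, interior (F n) = ∅) (S : Subgroup H) (hS : (S : Set H) ⊆ ⋃ n, F n) :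
    ∃ ψ : (ℕ → Bool) → H ⧸ S, Function.Injective ψ := by
  classical
  have base : MycLevel F 0 :=
    ⟨fun _ => univ, fun _ => isOpen_univ, fun _ => univ_nonempty,
      fun s t hst n hn => absurd hn (Nat.not_lt_zero n)⟩
  let T : ∀ k, MycLevel F k := fun k =>
    Nat.rec base (fun k Tk => (myc_step F hFc hFi k Tk).choose) k
  have hT : ∀ k (s : Fin (k + 1) → Bool),
      closure ((T (k + 1)).B s) ⊆ (T k).B (fun i => s i.castSucc) :=
    fun k s => (myc_step F hFc hFi k (T k)).choose_spec s
  set C : (ℕ → Bool) → ℕ → Set H := fun x k => closure ((T k).B (fun i => x i)) with hC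
  have hmono : ∀ x k, C x (k + 1) ⊆ C x k := by
    intro x k
    have h1 : (fun i : Fin k => (fun i : Fin (k+1) => x i) i.castSucc)
        = fun i : Fin k => x i := by
      funext i; simp
    have := hT k (fun i : Fin (k + 1) => x i)
    rw [h1] at this
    exact this.trans subset_closure
  have hne : ∀ x k, (C x k).Nonempty := fun x k => ((T k).ne _).mono subset_closure
  have key : ∀ x, (⋂ k, C x k).Nonempty := fun x =>
    IsCompact.nonempty_iInter_of_sequence_nonempty_isCompact_isClosed (C x)
      (hmono x) (hne x) isClosed_closure.isCompact (fun k => isClosed_closure)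
  choose u hu using key
  refine ⟨fun x => (QuotientGroup.mk (u x) : H ⧸ S), fun x y hxy => ?_⟩
  by_contra hne'
  obtain ⟨m, hm⟩ := Function.ne_iff.1 hne'
  have hmem : (u x)⁻¹ * u y ∈ (S : Set H) := QuotientGroup.eq.1 hxy
  obtain ⟨n, hn⟩ := mem_iUnion.1 (hS hmem)
  set k := max (m + 1) (n + 1) with hk
  have hmk : m < k := lt_of_lt_of_le (Nat.lt_succ_self m) (le_max_left _ _)
  have hnk : n < k := lt_of_lt_of_le (Nat.lt_succ_self n) (le_max_right _ _)
  have hsep := (T k).sep (fun i => x i) (fun i => y i)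
    (Function.ne_iff.2 ⟨⟨m, hmk⟩, hm⟩) n hnk
  exact hsep (u x) (mem_iInter.1 (hu x) k) (u y) (mem_iInter.1 (hu y) k) hn

end Myc

theorem compact_of_bijective_to_compact
    {G : Type*} [TopologicalSpace G] [Group G] [IsTopologicalGroup G]
    [LocallyCompactSpace G] [T2Space G]
    {H : Type*} [TopologicalSpace H] [Group H] [IsTopologicalGroup H]
    [CompactSpace H] [T2Space H]
    (hG : SigmaCompactLtContinuum G)
    (φ : G →* H) (hcont : Continuous φ) (hbij : Function.Bijective φ) :
    CompactSpace G := by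
  classical
  obtain ⟨𝒦, h𝒦card, h𝒦comp, h𝒦cover⟩ := hG
  obtain ⟨V, hVcomp, hVnhds⟩ := exists_compact_mem_nhds (1 : G)
  set W : Set G := V ∪ V⁻¹ with hW
  have hWcomp : IsCompact W := hVcomp.union hVcomp.inv
  have hWsymm : W⁻¹ = W := by rw [hW, Set.union_inv, inv_inv, Set.union_comm]
  have hWone : (1 : G) ∈ W := Or.inl (mem_of_mem_nhds hVnhds)
  have hWpowsymm : ∀ n : ℕ, (W ^ n)⁻¹ = W ^ n := by
    intro n; induction n with
    | zero => simp
    | succ n ih => rw [pow_succ, mul_inv_rev, ih, hWsymm, ← pow_succ', pow_succ]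
  have hWpowcomp : ∀ n : ℕ, IsCompact (W ^ (n + 1)) := by
    intro n; induction n with
    | zero => simpa [pow_one] using hWcomp
    | succ n ih => rw [pow_succ]; exact ih.mul hWcomp
  set O : Subgroup G :=
    { carrier := ⋃ n : ℕ, W ^ (n + 1)
      one_mem' := mem_iUnion.2 ⟨0, by simpa [pow_one] using hWone⟩
      mul_mem' := by
        intro a b ha hb
        obtain ⟨m, hm⟩ := mem_iUnion.1 ha
        obtain ⟨n, hn⟩ := mem_iUnion.1 hb
        refine mem_iUnion.2 ⟨m + n + 1, ?_⟩
        have h2 : (m + 1) + (n + 1) = m + n + 1 + 1 := by omega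
        have := Set.mul_mem_mul hm hn
        rwa [← pow_add, h2] at this
      inv_mem' := by
        intro a ha
        obtain ⟨n, hn⟩ := mem_iUnion.1 ha
        exact mem_iUnion.2 ⟨n, (hWpowsymm (n + 1)) ▸ Set.inv_mem_inv.2 hn⟩ } with hO
  have hOcoe : (O : Set G) = ⋃ n : ℕ, W ^ (n + 1) := rfl
  have hOnhds : (O : Set G) ∈ nhds (1 : G) :=
    Filter.mem_of_superset hVnhds
      (fun v hv => mem_iUnion.2 ⟨0, by rw [zero_add, pow_one]; exact Or.inl hv⟩)
  have hOopen : IsOpen (O : Set G) := O.isOpen_of_mem_nhds hOnhds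
  -- compact sets have finite image in the coset space
  have hfin : ∀ K : Set G, IsCompact K →
      ((QuotientGroup.mk '' K : Set (G ⧸ O))).Finite := by
    intro K hK
    obtain ⟨t, ht⟩ := hK.elim_finite_subcover (fun x : K => (x : G) • (O : Set G))
      (fun x => hOopen.smul _)
      (fun y hy => mem_iUnion.2 ⟨⟨y, hy⟩, ⟨1, O.one_mem, mul_one y⟩⟩)
    refine Set.Finite.subset
      (Set.Finite.image (fun x : K => (QuotientGroup.mk (x : G) : G ⧸ O)) t.finite_toSet) ?_
    rintro _ ⟨y, hyK, rfl⟩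
    obtain ⟨x, hx, hyx⟩ := mem_iUnion₂.1 (ht hyK)
    obtain ⟨o, ho, rfl⟩ := hyx
    refine ⟨x, hx, ?_⟩
    exact (QuotientGroup.eq.2 (by simpa [smul_eq_mul] using ho)).symm
  -- the coset space has < continuum elements
  have hcard : Cardinal.mk (G ⧸ O) < Cardinal.continuum := by
    have h1 : (1 : G) ∈ ⋃₀ 𝒦 := h𝒦cover ▸ mem_univ 1
    obtain ⟨K₀, hK₀, -⟩ := h1
    haveI : Nonempty ↥𝒦 := ⟨⟨K₀, hK₀⟩⟩
    have hcover2 : (univ : Set (G ⧸ O)) =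
        ⋃ K : 𝒦, QuotientGroup.mk '' (K : Set G) := by
      refine Set.eq_of_subset_of_subset (fun c _ => ?_) (subset_univ _)
      refine Quotient.inductionOn' c (fun g => ?_)
      have hg : g ∈ ⋃₀ 𝒦 := h𝒦cover ▸ mem_univ g
      obtain ⟨K, hK, hgK⟩ := hg
      exact mem_iUnion.2 ⟨⟨K, hK⟩, ⟨g, hgK, rfl⟩⟩
    have h3 := Cardinal.mk_iUnion_le (fun K : 𝒦 => (QuotientGroup.mk '' (K : Set G) : Set (G ⧸ O)))
    have h4 : (⨆ K : 𝒦, Cardinal.mk (QuotientGroup.mk '' (K : Set G) : Set (G ⧸ O)))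
        ≤ Cardinal.aleph0 :=
      ciSup_le' (fun K => ((hfin K (h𝒦comp K K.2)).lt_aleph0).le)
    calc Cardinal.mk (G ⧸ O) = Cardinal.mk (univ : Set (G ⧸ O)) := Cardinal.mk_univ.symm
      _ = Cardinal.mk (⋃ K : 𝒦, (QuotientGroup.mk '' (K : Set G) : Set (G ⧸ O))) := by
          rw [hcover2]
      _ ≤ Cardinal.mk ↥𝒦 * ⨆ K : 𝒦, Cardinal.mk (QuotientGroup.mk '' (K : Set G) : Set (G ⧸ O)) := h3
      _ ≤ Cardinal.mk ↥𝒦 * Cardinal.aleph0 := mul_le_mul_right h4 _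
      _ < Cardinal.continuum := Cardinal.mul_lt_of_lt Cardinal.aleph0_le_continuum
          h𝒦card Cardinal.aleph0_lt_continuum
  -- transfer to `H` via the bijection
  set S : Subgroup H := O.map φ with hS
  have hScoe : (S : Set H) = φ '' (O : Set G) := Subgroup.coe_map φ O
  let f : G ⧸ O → H ⧸ S := Quotient.map' φ (by
    intro a b hab
    have h1 : a⁻¹ * b ∈ O := QuotientGroup.leftRel_apply.1 hab
    refine QuotientGroup.leftRel_apply.2 ?_
    have : φ (a⁻¹ * b) ∈ S := Subgroup.mem_map_of_mem φ h1
    rwa [map_mul, map_inv] at this)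
  have hfmk : ∀ g : G, f (QuotientGroup.mk g) = QuotientGroup.mk (φ g) := fun g => rfl
  have hfinj : Function.Injective f := by
    intro c d
    refine Quotient.inductionOn₂' c d (fun a b h => ?_)
    have h' : (QuotientGroup.mk (φ a) : H ⧸ S) = QuotientGroup.mk (φ b) := h
    have h2 : (φ a)⁻¹ * φ b ∈ S := QuotientGroup.eq.1 h'
    rw [← map_inv, ← map_mul] at h2
    obtain ⟨o, ho, heq⟩ := Subgroup.mem_map.1 h2
    have : a⁻¹ * b ∈ O := by rwa [hbij.1 heq] at ho
    exact Quotient.sound' (QuotientGroup.leftRel_apply.2 this)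
  have hfsurj : Function.Surjective f := by
    intro c
    refine Quotient.inductionOn' c (fun h => ?_)
    obtain ⟨g, rfl⟩ := hbij.2 h
    exact ⟨QuotientGroup.mk g, rfl⟩
  -- dichotomy
  by_cases hint : ∀ n : ℕ, interior (φ '' (W ^ (n + 1))) = ∅
  · exfalso
    have hFc : ∀ n, IsClosed (φ '' (W ^ (n + 1))) :=
      fun n => ((hWpowcomp n).image hcont).isClosed
    have hScover : (S : Set H) ⊆ ⋃ n, φ '' (W ^ (n + 1)) := by
      rw [hScoe]
      rintro _ ⟨g, hg, rfl⟩
      obtain ⟨n, hn⟩ := mem_iUnion.1 hg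
      exact mem_iUnion.2 ⟨n, ⟨g, hn, rfl⟩⟩
    obtain ⟨ψ, hψ⟩ := exists_myc_injection _ hFc hint S hScover
    have hψ2 : Function.Injective
        (fun z : ULift (ℕ → Bool) => Function.surjInv hfsurj (ψ z.down)) := by
      intro a b hab
      exact ULift.down_injective (hψ (Function.injective_surjInv hfsurj hab))
    have h3 := Cardinal.mk_le_of_injective hψ2
    rw [Cardinal.mk_uLift] at h3
    have h4 : Cardinal.mk (ℕ → Bool) = Cardinal.continuum := by
      rw [← Cardinal.power_def, Cardinal.mk_bool, Cardinal.mk_nat, Cardinal.two_power_aleph0]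
    rw [h4, Cardinal.lift_continuum] at h3
    exact absurd hcard (not_lt.2 h3)
  · push_neg at hint
    obtain ⟨n, hn⟩ := hint
    obtain ⟨x, hx⟩ := hn
    have hsub : φ '' (W ^ (n + 1)) ⊆ (S : Set H) := by
      rw [hScoe]
      exact image_mono (fun w hw => mem_iUnion.2 ⟨n, hw⟩)
    have hSopen : IsOpen (S : Set H) :=
      S.isOpen_of_mem_nhds (g := x)
        (Filter.mem_of_superset (isOpen_interior.mem_nhds hx) (interior_subset.trans hsub))
    have hHfin : Finite (H ⧸ S) := by
      obtain ⟨t, ht⟩ := isCompact_univ.elim_finite_subcover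
        (fun x : H => x • (S : Set H)) (fun x => hSopen.smul x)
        (fun y _ => mem_iUnion.2 ⟨y, ⟨1, S.one_mem, mul_one y⟩⟩)
      have hsurj : Function.Surjective
          (fun x : ↥t => (QuotientGroup.mk (x : H) : H ⧸ S)) := by
        intro c
        refine Quotient.inductionOn' c (fun h => ?_)
        obtain ⟨y, hy, hhy⟩ := mem_iUnion₂.1 (ht (mem_univ h))
        obtain ⟨s, hs, rfl⟩ := hhy
        exact ⟨⟨y, hy⟩, QuotientGroup.eq.2 (by simpa [smul_eq_mul] using hs)⟩
      exact Finite.of_surjective _ hsurj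
    have hGfin : Finite (G ⧸ O) := Finite.of_injective f hfinj
    -- `G` is σ-compact
    have hcover3 : (univ : Set G) =
        ⋃ p : (G ⧸ O) × ℕ, (Quotient.out p.1) • (W ^ (p.2 + 1)) := by
      refine Set.eq_of_subset_of_subset (fun g _ => ?_) (subset_univ _)
      set c : G ⧸ O := QuotientGroup.mk g with hc
      have h1 : ((c.out : G) : G ⧸ O) = QuotientGroup.mk g := QuotientGroup.out_eq' c
      have h2 : (c.out)⁻¹ * g ∈ (O : Set G) := QuotientGroup.eq.1 h1
      obtain ⟨m, hm⟩ := mem_iUnion.1 h2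
      refine mem_iUnion.2 ⟨(c, m), ?_⟩
      exact ⟨(c.out)⁻¹ * g, hm, by simp [smul_eq_mul]⟩
    haveI : SigmaCompactSpace G := by
      refine ⟨?_⟩
      rw [show (univ : Set G) = ⋃ p : (G ⧸ O) × ℕ, (Quotient.out p.1) • (W ^ (p.2 + 1))
        from hcover3]
      exact isSigmaCompact_iUnion_of_isCompact _ (fun p => (hWpowcomp p.2).smul _)
    have hopen : IsOpenMap φ := MonoidHom.isOpenMap_of_sigmaCompact φ hbij.2 hcont
    exact (Equiv.toHomeomorphOfContinuousOpen
      (Equiv.ofBijective φ hbij) hcont hopen).symm.compactSpace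
end

section
/- Let G and H be locally compact Hausdorff groups such that G is a union of fewer than 𝔠 compact subsets and H is almost connected (H/H₀ compact). Then every continuous bijective group homomorphism φ : G → H is an isomorphism of topological groups. -/
open Set Function Pointwise

section Aux

variable {H : Type*} [TopologicalSpace H] [Group H] [IsTopologicalGroup H]
    [LocallyCompactSpace H] [T2Space H]

omit [T2Space H] in
/-- Point-picking: finitely many points in given nonempty open sets, pairwise avoiding
translate relations coming from closed nowhere dense sets. -/
lemma aux_pick_points (C : ℕ → Set H) (hCc : ∀ m, IsClosed (C m))
    (hCi : ∀ m, interior (C m) = ∅) (N : ℕ) :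
    ∀ (n : ℕ) (A : Fin n → Set H), (∀ i, IsOpen (A i)) → (∀ i, (A i).Nonempty) →
    ∃ x : Fin n → H, (∀ i, x i ∈ A i) ∧
      ∀ i j, i ≠ j → ∀ m < N, (x i)⁻¹ * x j ∉ C m := by
  intro n
  induction n with
  | zero => exact fun A _ _ => ⟨fun i => i.elim0, fun i => i.elim0, fun i => i.elim0⟩
  | succ n ih =>
    intro A hAo hAne
    obtain ⟨x, hx, hsep⟩ := ih (fun i => A i.castSucc) (fun i => hAo _) (fun i => hAne _)
    set e1 : Fin n → H ≃ₜ H := fun i => Homeomorph.mulLeft (x i)⁻¹ with he1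
    set e2 : Fin n → H ≃ₜ H := fun i => (Homeomorph.inv H).trans (Homeomorph.mulRight (x i)) with he2
    have hD : Dense (⋂ (p : Fin n × Fin N),
        ((e1 p.1) ⁻¹' (C p.2)ᶜ ∩ (e2 p.1) ⁻¹' (C p.2)ᶜ)) := by
      apply dense_iInter_of_isOpen
      · intro p
        exact (((hCc p.2).preimage (e1 p.1).continuous).isOpen_compl).inter
          (((hCc p.2).preimage (e2 p.1).continuous).isOpen_compl)
      · intro p
        have d1 : Dense ((e1 p.1) ⁻¹' (C p.2)ᶜ) := by
          rw [preimage_compl, ← interior_eq_empty_iff_dense_compl,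
            ← Homeomorph.preimage_interior, hCi p.2, preimage_empty]
        have d2 : Dense ((e2 p.1) ⁻¹' (C p.2)ᶜ) := by
          rw [preimage_compl, ← interior_eq_empty_iff_dense_compl,
            ← Homeomorph.preimage_interior, hCi p.2, preimage_empty]
        exact d1.inter_of_isOpen_left d2 ((hCc p.2).preimage (e1 p.1).continuous).isOpen_compl
    obtain ⟨y, hyA, hyD⟩ : ∃ y, y ∈ A (Fin.last n) ∧ y ∈ ⋂ (p : Fin n × Fin N),
        ((e1 p.1) ⁻¹' (C p.2)ᶜ ∩ (e2 p.1) ⁻¹' (C p.2)ᶜ) := by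
      obtain ⟨y, hy⟩ := hD.inter_open_nonempty _ (hAo (Fin.last n)) (hAne _)
      exact ⟨y, hy.1, hy.2⟩
    refine ⟨Fin.snoc x y, ?_, ?_⟩
    · intro i
      refine Fin.lastCases ?_ ?_ i
      · simpa using hyA
      · intro i; simpa using hx i
    · intro i j hij m hm
      have hy1 : ∀ i : Fin n, (x i)⁻¹ * y ∉ C m := by
        intro i
        have := mem_iInter.1 hyD (i, ⟨m, hm⟩)
        exact this.1
      have hy2 : ∀ i : Fin n, y⁻¹ * x i ∉ C m := by
        intro i
        have := mem_iInter.1 hyD (i, ⟨m, hm⟩)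
        exact this.2
      induction i using Fin.lastCases with
      | last =>
        induction j using Fin.lastCases with
        | last => exact absurd rfl hij
        | cast j =>
          simpa [Fin.snoc_last, Fin.snoc_castSucc] using hy2 j
      | cast i =>
        induction j using Fin.lastCases with
        | last =>
          simpa [Fin.snoc_last, Fin.snoc_castSucc] using hy1 i
        | cast j =>
          have hij' : i ≠ j := fun h => hij (by rw [h])
          simpa [Fin.snoc_castSucc] using hsep i j hij' m hm

omit [T2Space H] in
lemma aux_pick_points' (C : ℕ → Set H) (hCc : ∀ m, IsClosed (C m))
    (hCi : ∀ m, interior (C m) = ∅) (N : ℕ) {ι : Type*} [Fintype ι]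
    (A : ι → Set H) (hAo : ∀ i, IsOpen (A i)) (hAne : ∀ i, (A i).Nonempty) :
    ∃ x : ι → H, (∀ i, x i ∈ A i) ∧
      ∀ i j, i ≠ j → ∀ m < N, (x i)⁻¹ * x j ∉ C m := by
  classical
  let e := Fintype.equivFin ι
  obtain ⟨x, hx, hsep⟩ := aux_pick_points C hCc hCi N (Fintype.card ι)
    (fun k => A (e.symm k)) (fun k => hAo _) (fun k => hAne _)
  refine ⟨fun i => x (e i), fun i => by simpa using hx (e i), fun i j hij m hm => ?_⟩
  have hne : e i ≠ e j := fun h => hij (e.injective h)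
  simpa using hsep (e i) (e j) hne m hm

/-- One refinement step of the Cantor scheme. -/
lemma aux_refine_step (C : ℕ → Set H) (hCc : ∀ m, IsClosed (C m))
    (hCi : ∀ m, interior (C m) = ∅) (N : ℕ) {ι : Type*} [Fintype ι]
    (A : ι → Set H) (hAo : ∀ i, IsOpen (A i)) (hAne : ∀ i, (A i).Nonempty) :
    ∃ B : ι → Set H, (∀ i, IsOpen (B i)) ∧ (∀ i, (B i).Nonempty) ∧
      (∀ i, IsCompact (closure (B i))) ∧ (∀ i, closure (B i) ⊆ A i) ∧
      (∀ i j, i ≠ j → ∀ m < N, ∀ u ∈ B i, ∀ v ∈ B j, u⁻¹ * v ∉ C m) := by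
  classical
  obtain ⟨x, hxA, hxsep⟩ := aux_pick_points' C hCc hCi N A hAo hAne
  have hK : ∀ i, ∃ K : Set H, IsCompact K ∧ x i ∈ interior K ∧ K ⊆ A i :=
    fun i => exists_compact_subset (hAo i) (hxA i)
  choose K hKc hKx hKA using hK
  have key : ∀ (i j : ι), i ≠ j → ∀ (m : Fin N), ∃ R : Set H × Set H,
      IsOpen R.1 ∧ IsOpen R.2 ∧ x i ∈ R.1 ∧ x j ∈ R.2 ∧
      ∀ u ∈ R.1, ∀ v ∈ R.2, u⁻¹ * v ∉ C m := by
    intro i j hij m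
    have hcont : Continuous (fun p : H × H => p.1⁻¹ * p.2) := by continuity
    have hmem : (x i, x j) ∈ (fun p : H × H => p.1⁻¹ * p.2) ⁻¹' (C m)ᶜ :=
      hxsep i j hij m m.2
    have hopen : IsOpen ((fun p : H × H => p.1⁻¹ * p.2) ⁻¹' (C m)ᶜ) :=
      (hCc m).isOpen_compl.preimage hcont
    rw [isOpen_prod_iff] at hopen
    obtain ⟨R1, R2, h1, h2, h3, h4, h5⟩ := hopen _ _ hmem
    exact ⟨(R1, R2), h1, h2, h3, h4, fun u hu v hv => h5 (mk_mem_prod hu hv)⟩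
  choose R hR1 hR2 hRx1 hRx2 hRsep using key
  set B : ι → Set H := fun i => interior (K i) ∩
      (⋂ (j : ι) (h : i ≠ j) (m : Fin N), (R i j h m).1) ∩
      (⋂ (j : ι) (h : j ≠ i) (m : Fin N), (R j i h m).2) with hB
  have hBo : ∀ i, IsOpen (B i) := by
    intro i
    refine (isOpen_interior.inter ?_).inter ?_ <;>
      exact isOpen_iInter_of_finite fun j => isOpen_iInter_of_finite fun h =>
        isOpen_iInter_of_finite fun m => by first | exact hR1 _ _ _ _ | exact hR2 _ _ _ _
  have hBx : ∀ i, x i ∈ B i := by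
    intro i
    refine ⟨⟨hKx i, ?_⟩, ?_⟩
    · exact mem_iInter.2 fun j => mem_iInter.2 fun h => mem_iInter.2 fun m => hRx1 i j h m
    · exact mem_iInter.2 fun j => mem_iInter.2 fun h => mem_iInter.2 fun m => hRx2 j i h m
  refine ⟨B, hBo, fun i => ⟨x i, hBx i⟩, ?_, ?_, ?_⟩
  · intro i
    exact (hKc i).of_isClosed_subset isClosed_closure
      (closure_minimal (fun y hy => interior_subset hy.1.1) (hKc i).isClosed)
  · intro i
    exact (closure_minimal (fun y hy => interior_subset hy.1.1) (hKc i).isClosed).trans (hKA i)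
  · intro i j hij m hm u hu v hv
    have hu' : u ∈ (R i j hij ⟨m, hm⟩).1 := by
      have := hu.1.2
      rw [mem_iInter] at this
      have := mem_iInter.1 (this j) hij
      exact mem_iInter.1 this ⟨m, hm⟩
    have hv' : v ∈ (R i j hij ⟨m, hm⟩).2 := by
      have := hv.2
      rw [mem_iInter] at this
      have := mem_iInter.1 (this i) hij
      exact mem_iInter.1 this ⟨m, hm⟩
    exact hRsep i j hij ⟨m, hm⟩ u hu' v hv'

/-- From closed nowhere dense sets `C m`, a Cantor scheme produces continuum many points
pairwise avoiding all the relations `x⁻¹ * y ∈ C m`. -/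
lemma aux_exists_continuum_separated (C : ℕ → Set H) (hCc : ∀ m, IsClosed (C m))
    (hCi : ∀ m, interior (C m) = ∅) :
    ∃ x : (ℕ → Bool) → H, ∀ σ τ : ℕ → Bool, σ ≠ τ → ∀ m, (x σ)⁻¹ * x τ ∉ C m := by
  classical
  have step : ∀ (n : ℕ) (L : (Fin n → Bool) → Set H),
      ((∀ s, IsOpen (L s)) ∧ (∀ s, (L s).Nonempty)) →
      ∃ L' : (Fin (n+1) → Bool) → Set H,
        ((∀ s, IsOpen (L' s)) ∧ (∀ s, (L' s).Nonempty)) ∧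
        (∀ s, IsCompact (closure (L' s))) ∧
        (∀ s, closure (L' s) ⊆ L (Fin.init s)) ∧
        (∀ s t, s ≠ t → ∀ m < n, ∀ u ∈ L' s, ∀ v ∈ L' t, u⁻¹ * v ∉ C m) := by
    intro n L hL
    obtain ⟨B, h1, h2, h3, h4, h5⟩ := aux_refine_step C hCc hCi n
      (fun s : Fin (n+1) → Bool => L (Fin.init s)) (fun s => hL.1 _) (fun s => hL.2 _)
    exact ⟨B, ⟨h1, h2⟩, h3, h4, h5⟩
  obtain ⟨K0, hK0c, hK0⟩ := exists_compact_mem_nhds (1 : H)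
  have hbase : (∀ s : Fin 0 → Bool, IsOpen (interior K0)) ∧
      (∀ s : Fin 0 → Bool, (interior K0).Nonempty) :=
    ⟨fun _ => isOpen_interior, fun _ => ⟨1, mem_interior_iff_mem_nhds.2 hK0⟩⟩
  let seq : ∀ n : ℕ, {L : (Fin n → Bool) → Set H // (∀ s, IsOpen (L s)) ∧ ∀ s, (L s).Nonempty} :=
    fun n => Nat.rec ⟨fun _ => interior K0, hbase⟩
      (fun n P => ⟨(step n P.1 P.2).choose, (step n P.1 P.2).choose_spec.1⟩) n
  have seq_succ : ∀ n, (seq (n+1)).1 = (step n (seq n).1 (seq n).2).choose := fun n => rfl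
  have hcpt : ∀ n s, IsCompact (closure ((seq (n+1)).1 s)) := by
    intro n s; rw [seq_succ]; exact (step n (seq n).1 (seq n).2).choose_spec.2.1 s
  have hsub : ∀ n s, closure ((seq (n+1)).1 s) ⊆ (seq n).1 (Fin.init s) := by
    intro n s; rw [seq_succ]; exact (step n (seq n).1 (seq n).2).choose_spec.2.2.1 s
  have hsep : ∀ n, ∀ s t : Fin (n+1) → Bool, s ≠ t → ∀ m < n,
      ∀ u ∈ (seq (n+1)).1 s, ∀ v ∈ (seq (n+1)).1 t, u⁻¹ * v ∉ C m := by
    intro n; rw [seq_succ]; exact (step n (seq n).1 (seq n).2).choose_spec.2.2.2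
  have hinit : ∀ (σ : ℕ → Bool) (n : ℕ),
      Fin.init (fun i : Fin (n+1) => σ i) = fun i : Fin n => σ i := by
    intro σ n; funext i; simp [Fin.init]
  set T : (ℕ → Bool) → ℕ → Set H :=
    fun σ n => closure ((seq (n+1)).1 (fun i : Fin (n+1) => σ i)) with hT
  have hTne : ∀ σ n, (T σ n).Nonempty := fun σ n =>
    ((seq (n+1)).2.2 _).mono subset_closure
  have hTsub : ∀ σ n, T σ (n+1) ⊆ T σ n := by
    intro σ n
    calc T σ (n+1) ⊆ (seq (n+1)).1 (fun i : Fin (n+1) => σ i) := by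
          rw [hT]
          simpa [hinit σ (n+1)] using hsub (n+1) (fun i : Fin (n+2) => σ i)
      _ ⊆ T σ n := subset_closure
  have hTmem : ∀ σ, (⋂ n, T σ n).Nonempty := by
    intro σ
    exact IsCompact.nonempty_iInter_of_sequence_nonempty_isCompact_isClosed
      (T σ) (hTsub σ) (hTne σ) (hcpt 0 _) (fun n => isClosed_closure)
  choose x hx using hTmem
  refine ⟨x, ?_⟩
  intro σ τ hστ m
  obtain ⟨i, hi⟩ : ∃ i, σ i ≠ τ i := by
    by_contra h
    push_neg at h
    exact hστ (funext h)
  set n : ℕ := max i m + 1 with hn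
  have hxσ : x σ ∈ (seq (n+1)).1 (fun j : Fin (n+1) => σ j) := by
    have hmem := mem_iInter.1 (hx σ) (n+1)
    have h2 := hsub (n+1) (fun j : Fin (n+2) => σ j)
    rw [hinit σ (n+1)] at h2
    exact h2 hmem
  have hxτ : x τ ∈ (seq (n+1)).1 (fun j : Fin (n+1) => τ j) := by
    have hmem := mem_iInter.1 (hx τ) (n+1)
    have h2 := hsub (n+1) (fun j : Fin (n+2) => τ j)
    rw [hinit τ (n+1)] at h2
    exact h2 hmem
  have hne : (fun j : Fin (n+1) => σ j) ≠ (fun j : Fin (n+1) => τ j) := by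
    intro h
    have hin : i < n + 1 := by omega
    exact hi (congrFun h ⟨i, hin⟩)
  exact hsep n _ _ hne m (by omega) _ hxσ _ hxτ

omit [T2Space H] in
/-- A locally compact group has an open subgroup with a compact exhaustion. -/
lemma aux_exists_open_subgroup_sigma_compact :
    ∃ (U : Subgroup H) (P : ℕ → Set H), IsOpen (U : Set H) ∧ (∀ n, IsCompact (P n)) ∧
      (∀ n, (1 : H) ∈ P n) ∧ (⋃ n, P n) = (U : Set H) := by
  obtain ⟨K, hKc, hK⟩ := exists_compact_mem_nhds (1 : H)
  set Q : Set H := K ∪ K⁻¹ ∪ {1} with hQ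
  have hQc : IsCompact Q := (hKc.union hKc.inv).union isCompact_singleton
  have h1Q : (1 : H) ∈ Q := by simp [hQ]
  have hQsymm : Q⁻¹ = Q := by
    rw [hQ]
    ext g
    simp only [Set.mem_inv, Set.mem_union, Set.mem_singleton_iff, inv_eq_one]
    constructor
    · rintro ((h | h) | h)
      · exact Or.inl (Or.inr (by simpa using h))
      · exact Or.inl (Or.inl (by simpa using h))
      · exact Or.inr h
    · rintro ((h | h) | h)
      · exact Or.inl (Or.inr (by simpa using h))
      · exact Or.inl (Or.inl (by simpa using h))
      · exact Or.inr h
  have hpowc : ∀ n : ℕ, IsCompact (Q ^ (n+1)) := by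
    intro n
    induction n with
    | zero => simpa [pow_one] using hQc
    | succ n ih => rw [pow_succ]; exact ih.mul hQc
  have hpow1 : ∀ n : ℕ, (1 : H) ∈ Q ^ (n+1) := by
    intro n
    induction n with
    | zero => simpa [pow_one] using h1Q
    | succ n ih => rw [pow_succ]; simpa using Set.mul_mem_mul ih h1Q
  refine ⟨{ carrier := ⋃ n, Q ^ (n+1),
            one_mem' := mem_iUnion.2 ⟨0, hpow1 0⟩,
            mul_mem' := ?_,
            inv_mem' := ?_ }, fun n => Q ^ (n+1), ?_, hpowc, hpow1, rfl⟩
  · rintro a b ha hb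
    obtain ⟨m, hm⟩ := mem_iUnion.1 ha
    obtain ⟨k, hk⟩ := mem_iUnion.1 hb
    refine mem_iUnion.2 ⟨m + k + 1, ?_⟩
    have hqq : Q ^ (m+1) * Q ^ (k+1) = Q ^ (m+k+1+1) := by rw [← pow_add]; ring_nf
    rw [← hqq]
    exact Set.mul_mem_mul hm hk
  · rintro a ha
    obtain ⟨m, hm⟩ := mem_iUnion.1 ha
    refine mem_iUnion.2 ⟨m, ?_⟩
    have hinv : a⁻¹ ∈ (Q ^ (m+1))⁻¹ := by simpa using hm
    rwa [← inv_pow, hQsymm] at hinv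
  · apply Subgroup.isOpen_of_mem_nhds
    refine Filter.mem_of_superset hK ?_
    intro g hg
    exact mem_iUnion.2 ⟨0, by rw [pow_one, hQ]; exact Or.inl (Or.inl hg)⟩

end Aux

theorem iso_of_bijective_to_almost_connected
    {G : Type*} [TopologicalSpace G] [Group G] [IsTopologicalGroup G]
    [LocallyCompactSpace G] [T2Space G]
    {H : Type*} [TopologicalSpace H] [Group H] [IsTopologicalGroup H]
    [LocallyCompactSpace H] [T2Space H]
    (hG : SigmaCompactLtContinuum G)
    (hH : CompactSpace (H ⧸ Subgroup.connectedComponentOfOne H))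
    (φ : G →* H) (hcont : Continuous φ) (hbij : Function.Bijective φ) :
    ∃ e : G ≃ₜ H, ⇑e = ⇑φ := by
  classical
  obtain ⟨U, P, hUopen, hPc, hP1, hPU⟩ := aux_exists_open_subgroup_sigma_compact (H := G)
  haveI hdisc : DiscreteTopology (G ⧸ U) := QuotientGroup.discreteTopology hUopen
  obtain ⟨𝒦, h𝒦card, h𝒦c, h𝒦u⟩ := hG
  -- the index of U in G is < continuum
  have hcard : Cardinal.mk (G ⧸ U) < Cardinal.continuum := by
    have hcover : (univ : Set (G ⧸ U)) = ⋃ K : 𝒦, QuotientGroup.mk '' (K : Set G) := by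
      apply Subset.antisymm
      · intro q _
        obtain ⟨g, rfl⟩ := QuotientGroup.mk_surjective q
        have : g ∈ ⋃₀ 𝒦 := by rw [h𝒦u]; trivial
        obtain ⟨K, hK, hgK⟩ := this
        exact mem_iUnion.2 ⟨⟨K, hK⟩, mem_image_of_mem _ hgK⟩
      · exact subset_univ _
    have hfin : ∀ K : 𝒦, (QuotientGroup.mk '' (K : Set G) : Set (G ⧸ U)).Finite :=
      fun K => ((h𝒦c K K.2).image QuotientGroup.continuous_mk).finite_of_discrete
    calc Cardinal.mk (G ⧸ U) = Cardinal.mk (univ : Set (G ⧸ U)) := Cardinal.mk_univ.symm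
      _ = Cardinal.mk (⋃ K : 𝒦, QuotientGroup.mk '' (K : Set G) : Set (G ⧸ U)) := by rw [hcover]
      _ ≤ Cardinal.mk 𝒦 * ⨆ K : 𝒦, Cardinal.mk (QuotientGroup.mk '' (K : Set G) : Set (G ⧸ U)) :=
          Cardinal.mk_iUnion_le _
      _ ≤ Cardinal.mk 𝒦 * Cardinal.aleph0 := by
          gcongr
          exact ciSup_le' fun K => ((hfin K).lt_aleph0).le
      _ < Cardinal.continuum :=
          Cardinal.mul_lt_of_lt Cardinal.aleph0_le_continuum h𝒦card Cardinal.aleph0_lt_continuum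
  set V : Subgroup H := U.map φ with hV
  -- the induced map on quotients
  have hrel : ∀ a b : G, (QuotientGroup.leftRel U) a b → (QuotientGroup.leftRel V) (φ a) (φ b) := by
    intro a b hab
    rw [QuotientGroup.leftRel_apply] at hab ⊢
    exact ⟨a⁻¹ * b, hab, by simp⟩
  set ψ : G ⧸ U → H ⧸ V := Quotient.map' φ hrel with hψ
  have hψmk : ∀ g : G, ψ (QuotientGroup.mk g) = QuotientGroup.mk (φ g) := fun g => rfl
  have hψsurj : Surjective ψ := by
    intro q
    obtain ⟨h, rfl⟩ := QuotientGroup.mk_surjective q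
    obtain ⟨g, rfl⟩ := hbij.2 h
    exact ⟨QuotientGroup.mk g, hψmk g⟩
  have hψinj : Injective ψ := by
    intro a b hab
    obtain ⟨a, rfl⟩ := QuotientGroup.mk_surjective a
    obtain ⟨b, rfl⟩ := QuotientGroup.mk_surjective b
    rw [hψmk, hψmk, QuotientGroup.eq] at hab
    obtain ⟨u, huU, huval⟩ := hab
    rw [QuotientGroup.eq]
    have : φ u = φ (a⁻¹ * b) := by rw [huval]; simp
    rwa [← hbij.1 this]
  -- G is sigma-compact
  have hsigma : SigmaCompactSpace G := by
    by_cases hint : ∃ n, (interior (φ '' P n)).Nonempty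
    · -- some piece of φ(U) has interior: V is open, H/V finite, so G/U finite
      obtain ⟨n, v, hv⟩ := hint
      have hsubV : φ '' P n ⊆ (V : Set H) := by
        rintro _ ⟨g, hg, rfl⟩
        have hgU : g ∈ (U : Set G) := by rw [← hPU]; exact mem_iUnion.2 ⟨n, hg⟩
        exact ⟨g, hgU, rfl⟩
      have hVopen : IsOpen (V : Set H) := by
        apply Subgroup.isOpen_of_mem_nhds (g := v)
        exact Filter.mem_of_superset (isOpen_interior.mem_nhds hv)
          (interior_subset.trans hsubV)
      have hVclosed : IsClosed (V : Set H) := V.isClosed_of_isOpen hVopen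
      have hH0V : (Subgroup.connectedComponentOfOne H : Set H) ⊆ (V : Set H) :=
        IsClopen.connectedComponent_subset ⟨hVclosed, hVopen⟩ (one_mem V)
      have hrel0 : ∀ a b : H, (QuotientGroup.leftRel (Subgroup.connectedComponentOfOne H)) a b →
          (QuotientGroup.leftRel V) a b := by
        intro a b hab
        rw [QuotientGroup.leftRel_apply] at hab ⊢
        exact hH0V hab
      set χ : H ⧸ Subgroup.connectedComponentOfOne H → H ⧸ V := Quotient.map' id hrel0 with hχ
      have hχcont : Continuous χ := continuous_id.quotient_map' hrel0
      have hχsurj : Surjective χ := by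
        intro q
        obtain ⟨h, rfl⟩ := QuotientGroup.mk_surjective q
        exact ⟨QuotientGroup.mk h, rfl⟩
      haveI : CompactSpace (H ⧸ V) := by
        constructor
        rw [← image_univ_of_surjective hχsurj]
        exact CompactSpace.isCompact_univ.image hχcont
      haveI : DiscreteTopology (H ⧸ V) := QuotientGroup.discreteTopology hVopen
      haveI : Finite (H ⧸ V) := finite_of_compact_of_discrete
      haveI : Finite (G ⧸ U) := Finite.of_injective ψ hψinj
      constructor
      have hcover : (univ : Set G) = ⋃ q : G ⧸ U, (fun g => Quotient.out q * g) '' (U : Set G) := by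
        apply Subset.antisymm
        · intro g _
          refine mem_iUnion.2 ⟨QuotientGroup.mk g, (Quotient.out (QuotientGroup.mk g))⁻¹ * g,
            ?_, mul_inv_cancel_left _ _⟩
          have : QuotientGroup.mk (Quotient.out (QuotientGroup.mk g : G ⧸ U)) =
              (QuotientGroup.mk g : G ⧸ U) := Quotient.out_eq _
          exact QuotientGroup.eq.1 this
        · exact subset_univ _
      rw [hcover]
      apply isSigmaCompact_iUnion
      intro q
      have : IsSigmaCompact (U : Set G) := ⟨P, hPc, hPU⟩
      exact this.image (continuous_mul_left _)
    · -- all pieces nowhere dense: Cantor scheme gives continuum many cosets, contradiction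
      exfalso
      push_neg at hint
      obtain ⟨x, hxsep⟩ := aux_exists_continuum_separated (fun n => φ '' P n)
        (fun n => ((hPc n).image hcont).isClosed) hint
      have hemb : Injective (fun σ : ℕ → Bool => (QuotientGroup.mk (x σ) : H ⧸ V)) := by
        intro σ τ hστ
        by_contra hne
        rw [QuotientGroup.eq] at hστ
        obtain ⟨u, huU, huval⟩ := hστ
        have : u ∈ ⋃ n, P n := by rw [hPU]; exact huU
        obtain ⟨n, hn⟩ := mem_iUnion.1 this
        exact hxsep σ τ hne n ⟨u, hn, huval⟩
      have hNB : Cardinal.mk (ℕ → Bool) = Cardinal.continuum := by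
        rw [← Cardinal.power_def, Cardinal.mk_bool, Cardinal.mk_nat, Cardinal.two_power_aleph0]
      have h1 : Cardinal.continuum ≤ Cardinal.mk (H ⧸ V) := by
        have := Cardinal.lift_mk_le'.mpr
          ⟨⟨fun σ : ℕ → Bool => (QuotientGroup.mk (x σ) : H ⧸ V), hemb⟩⟩
        rw [hNB, Cardinal.lift_continuum, Cardinal.lift_uzero] at this
        exact this
      have h2 := Cardinal.lift_mk_le'.mpr ⟨⟨surjInv hψsurj, injective_surjInv hψsurj⟩⟩
      have hlt := Cardinal.lift_lt.mpr hcard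
      have hge := Cardinal.lift_le.mpr h1
      rw [Cardinal.lift_continuum] at hlt hge
      exact absurd ((hge.trans h2).trans_lt hlt) (lt_irrefl _)
  haveI := hsigma
  have hopen : IsOpenMap ⇑φ := MonoidHom.isOpenMap_of_sigmaCompact φ hbij.2 hcont
  exact ⟨Equiv.toHomeomorphOfContinuousOpen (Equiv.ofBijective ⇑φ hbij) hcont hopen, rfl⟩
end

section
/- Let G and H be locally compact Hausdorff groups, each a union of fewer than 𝔠 compact subsets, and let φ : G → H be a group homomorphism. Then φ is continuous if and only if its graph {(g, φ(g)) : g ∈ G} is closed in G × H. -/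
open Set Topology Pointwise
set_option linter.unusedSectionVars false
set_option maxHeartbeats 1000000

namespace CGT
variable {G : Type*} [TopologicalSpace G] [Group G] [IsTopologicalGroup G]

lemma interior_union_eq_empty {A B : Set G} (hA : IsClosed A) (hAi : interior A = ∅)
    (hBi : interior B = ∅) : interior (A ∪ B) = ∅ := by
  have h1 : interior (A ∪ B) \ A ⊆ B := fun y hy => (interior_subset hy.1).resolve_left hy.2
  have h2 : interior (A ∪ B) \ A ⊆ interior B :=
    ((isOpen_interior.sdiff hA).subset_interior_iff).2 h1
  rw [hBi, subset_empty_iff, diff_eq_empty] at h2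
  have h3 : interior (A ∪ B) ⊆ interior A := (isOpen_interior.subset_interior_iff).2 h2
  rw [hAi, subset_empty_iff] at h3
  exact h3

lemma interior_biUnion_finset_eq_empty {ι : Type*} (s : Finset ι) (A : ι → Set G)
    (hA : ∀ j, IsClosed (A j)) (hAi : ∀ j, interior (A j) = ∅) :
    interior (⋃ j ∈ s, A j) = ∅ := by
  classical
  induction s using Finset.induction_on with
  | empty => simp
  | @insert a s ha ih =>
      rw [Finset.set_biUnion_insert]
      exact interior_union_eq_empty (hA a) (hAi a) ih

lemma exists_not_mem_of_interior_empty {U : Set G} (hU : IsOpen U) (hne : U.Nonempty)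
    {B : Set G} (hBi : interior B = ∅) : ∃ x ∈ U, x ∉ B := by
  by_contra h
  push_neg at h
  have : U ⊆ interior B := hU.subset_interior_iff.2 h
  rw [hBi, subset_empty_iff] at this
  exact hne.ne_empty this

lemma interior_inv_empty {D : Set G} (hDi : interior D = ∅) : interior D⁻¹ = ∅ := by
  have h := (Homeomorph.inv G).image_interior D
  have : interior D⁻¹ = (interior D)⁻¹ := by simpa [Set.image_inv] using h.symm
  rw [this, hDi]; simp

lemma exists_points {ι : Type*} (s : Finset ι) (U : ι → Set G)
    (hUo : ∀ j, IsOpen (U j)) (hUne : ∀ j, (U j).Nonempty)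
    {D : Set G} (hD : IsClosed D) (hDi : interior D = ∅) :
    ∃ u : ι → G, (∀ j ∈ s, u j ∈ U j) ∧
      ∀ j ∈ s, ∀ j' ∈ s, j ≠ j' → (u j)⁻¹ * u j' ∉ D := by
  classical
  induction s using Finset.induction_on with
  | empty => exact ⟨fun j => (hUne j).choose, by simp, by simp⟩
  | @insert a s ha ih =>
      obtain ⟨u, hu1, hu2⟩ := ih
      set E : Set G := D ∪ D⁻¹ with hE
      have hEc : IsClosed E := hD.union hD.inv
      have hEi : interior E = ∅ :=
        interior_union_eq_empty hD hDi (interior_inv_empty hDi)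
      have hBi : interior (⋃ j ∈ s, (u j • E)) = ∅ :=
        interior_biUnion_finset_eq_empty s _ (fun j => hEc.smul (u j))
          (fun j => by rw [interior_smul]; simp [hEi])
      obtain ⟨v, hvU, hvB⟩ := exists_not_mem_of_interior_empty (hUo a) (hUne a) hBi
      refine ⟨Function.update u a v, ?_, ?_⟩
      · intro j hj
        rcases Finset.mem_insert.1 hj with rfl | hjs
        · simpa using hvU
        · have hja : j ≠ a := fun h => ha (h ▸ hjs)
          simpa [Function.update_of_ne hja] using hu1 j hjs
      · intro j hj j' hj' hjj'
        have hnotin : ∀ k ∈ s, v ∉ u k • E := by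
          intro k hk hvk
          exact hvB (Set.mem_biUnion hk hvk)
        rcases Finset.mem_insert.1 hj with rfl | hjs
        · rcases Finset.mem_insert.1 hj' with rfl | hjs'
          · exact absurd rfl hjj'
          · have hj'a : j' ≠ j := fun h => ha (h ▸ hjs')
            rw [Function.update_self, Function.update_of_ne hj'a]
            intro hmem
            apply hnotin j' hjs'
            rw [mem_smul_set_iff_inv_smul_mem]
            have : (u j')⁻¹ * v ∈ D⁻¹ := by
              rw [Set.mem_inv, mul_inv_rev, inv_inv]
              exact hmem
            exact Set.mem_union_right _ this
        · have hja : j ≠ a := fun h => ha (h ▸ hjs)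
          rcases Finset.mem_insert.1 hj' with rfl | hjs'
          · rw [Function.update_self, Function.update_of_ne hja]
            intro hmem
            apply hnotin j hjs
            rw [mem_smul_set_iff_inv_smul_mem]
            exact Set.mem_union_left _ hmem
          · have hj'a : j' ≠ a := fun h => ha (h ▸ hjs')
            rw [Function.update_of_ne hja, Function.update_of_ne hj'a]
            exact hu2 j hjs j' hjs' hjj'

end CGT
namespace CGT
section AUX2
variable {G : Type*} [TopologicalSpace G] [Group G] [IsTopologicalGroup G]

lemma exists_shrink {ι : Type*} [Fintype ι] [LocallyCompactSpace G] [T2Space G]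
    (U : ι → Set G) (hUo : ∀ j, IsOpen (U j)) (hUne : ∀ j, (U j).Nonempty)
    {D : Set G} (hD : IsClosed D) (hDi : interior D = ∅) :
    ∃ W : ι → Set G, (∀ j, IsOpen (W j)) ∧ (∀ j, (W j).Nonempty) ∧
      (∀ j, IsCompact (closure (W j))) ∧ (∀ j, closure (W j) ⊆ U j) ∧
      (∀ j j', j ≠ j' → ∀ x ∈ closure (W j), ∀ y ∈ closure (W j'), x⁻¹ * y ∉ D) := by
  classical
  obtain ⟨u, hu1, hu2⟩ := exists_points Finset.univ U hUo hUne hD hDi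
  have hu1' : ∀ j, u j ∈ U j := fun j => hu1 j (Finset.mem_univ j)
  have hu2' : ∀ j j', j ≠ j' → (u j)⁻¹ * u j' ∉ D :=
    fun j j' h => hu2 j (Finset.mem_univ j) j' (Finset.mem_univ j') h
  -- the open set of "good" pairs
  have hΩ : IsOpen {q : G × G | q.1⁻¹ * q.2 ∉ D} := by
    have : Continuous fun q : G × G => q.1⁻¹ * q.2 := (continuous_fst.inv).mul continuous_snd
    exact hD.isOpen_compl.preimage this
  have key : ∀ p : ι × ι, ∃ PQ : Set G × Set G, IsOpen PQ.1 ∧ IsOpen PQ.2 ∧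
      u p.1 ∈ PQ.1 ∧ u p.2 ∈ PQ.2 ∧
      (p.1 ≠ p.2 → ∀ x ∈ PQ.1, ∀ y ∈ PQ.2, x⁻¹ * y ∉ D) := by
    intro p
    by_cases hp : p.1 = p.2
    · exact ⟨⟨univ, univ⟩, isOpen_univ, isOpen_univ, trivial, trivial, fun h => absurd hp h⟩
    · have hmem : (u p.1, u p.2) ∈ {q : G × G | q.1⁻¹ * q.2 ∉ D} := hu2' p.1 p.2 hp
      obtain ⟨P, Q, hP, hQ, hPm, hQm, hPQ⟩ := isOpen_prod_iff.1 hΩ (u p.1) (u p.2) hmem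
      exact ⟨⟨P, Q⟩, hP, hQ, hPm, hQm, fun _ x hx y hy => hPQ (mk_mem_prod hx hy)⟩
  choose PQ hP hQ hPm hQm hsep using key
  set R : ι → Set G := fun j => U j ∩ ⋂ j', ((PQ (j, j')).1 ∩ (PQ (j', j)).2) with hR
  have hRo : ∀ j, IsOpen (R j) := by
    intro j
    exact (hUo j).inter (isOpen_iInter_of_finite fun j' => ((hP _).inter (hQ _)))
  have hRm : ∀ j, u j ∈ R j := by
    intro j
    exact ⟨hu1' j, mem_iInter.2 fun j' => ⟨hPm (j, j'), hQm (j', j)⟩⟩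
  have hcpt : ∀ j, ∃ M : Set G, IsCompact M ∧ u j ∈ interior M ∧ M ⊆ R j := by
    intro j
    obtain ⟨M, hM, hM1, hM2⟩ := exists_compact_between isCompact_singleton (hRo j)
      (singleton_subset_iff.2 (hRm j))
    exact ⟨M, hM, hM1 rfl, hM2⟩
  choose M hMc hMi hMR using hcpt
  refine ⟨fun j => interior (M j), fun j => isOpen_interior, fun j => ⟨u j, hMi j⟩,
    ?_, ?_, ?_⟩
  · intro j
    exact (hMc j).of_isClosed_subset isClosed_closure
      (closure_minimal interior_subset (hMc j).isClosed)
  · intro j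
    exact (closure_minimal interior_subset (hMc j).isClosed).trans
      ((hMR j).trans (inter_subset_left))
  · intro j j' hjj' x hx y hy
    have hxR : x ∈ R j := (closure_minimal interior_subset (hMc j).isClosed).trans (hMR j) hx
    have hyR : y ∈ R j' := (closure_minimal interior_subset (hMc j').isClosed).trans (hMR j') hy
    have hxP : x ∈ (PQ (j, j')).1 := (mem_iInter.1 hxR.2 j').1
    have hyQ : y ∈ (PQ (j, j')).2 := (mem_iInter.1 hyR.2 j).2
    exact hsep (j, j') hjj' x hxP y hyQ

end AUX2
end CGT
namespace CGT
section AUX3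
variable {G : Type*} [TopologicalSpace G] [Group G] [IsTopologicalGroup G]


/-- Invariant for level `n` of the Cantor scheme. -/
abbrev GoodN (A : ℕ → Set G) (n : ℕ) (F : (ℕ → Bool) → Set G) : Prop :=
  (∀ b, IsOpen (F b)) ∧ (∀ b, (F b).Nonempty) ∧ (∀ b, IsCompact (closure (F b))) ∧
  (∀ b b', (∀ i, i < n → b i = b' i) → F b = F b') ∧
  (∀ b b', (∃ i, i < n ∧ b i ≠ b' i) →
    ∀ x ∈ closure (F b), ∀ y ∈ closure (F b'), x⁻¹ * y ∉ A n)

variable [LocallyCompactSpace G] [T2Space G]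

lemma level0_exists (A : ℕ → Set G) : ∃ F : (ℕ → Bool) → Set G, GoodN A 0 F := by
  obtain ⟨M, hM, hM1, hM2⟩ := exists_compact_between (isCompact_singleton (x := (1 : G)))
    isOpen_univ (subset_univ _)
  refine ⟨fun _ => interior M, fun _ => isOpen_interior, fun _ => ⟨1, hM1 rfl⟩, ?_, ?_, ?_⟩
  · intro b
    exact hM.of_isClosed_subset isClosed_closure (closure_minimal interior_subset hM.isClosed)
  · intro b b' _; rfl
  · rintro b b' ⟨i, hi, _⟩
    exact absurd hi (Nat.not_lt_zero i)

lemma step_exists (A : ℕ → Set G) (hA : ∀ n, IsClosed (A n)) (hAi : ∀ n, interior (A n) = ∅)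
    (n : ℕ) (F : (ℕ → Bool) → Set G) (hF : GoodN A n F) :
    ∃ F' : (ℕ → Bool) → Set G, GoodN A (n + 1) F' ∧ ∀ b, closure (F' b) ⊆ F b := by
  classical
  obtain ⟨hFo, hFne, hFc, hFdet, hFsep⟩ := hF
  set ext : (Fin (n + 1) → Bool) → (ℕ → Bool) :=
    fun s i => if h : i < n + 1 then s ⟨i, h⟩ else false with hext
  obtain ⟨W, hWo, hWne, hWc, hWsub, hWsep⟩ :=
    exists_shrink (ι := Fin (n + 1) → Bool) (fun s => F (ext s))
      (fun s => hFo _) (fun s => hFne _) (hA (n + 1)) (hAi (n + 1))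
  set res : (ℕ → Bool) → (Fin (n + 1) → Bool) := fun b i => b i with hres
  refine ⟨fun b => W (res b), ⟨fun b => hWo _, fun b => hWne _, fun b => hWc _, ?_, ?_⟩, ?_⟩
  · -- determination
    intro b b' hagree
    have h : res b = res b' := funext fun i => hagree i i.isLt
    show W (res b) = W (res b')
    rw [h]
  · -- separation
    rintro b b' ⟨i, hi, hne⟩ x hx y hy
    have : res b ≠ res b' := by
      intro h
      exact hne (congrFun h ⟨i, hi⟩)
    exact hWsep _ _ this x hx y hy
  · -- link
    intro b
    have h1 : closure (W (res b)) ⊆ F (ext (res b)) := hWsub (res b)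
    have h2 : F (ext (res b)) = F b := by
      apply hFdet
      intro i hi
      have hi' : i < n + 1 := Nat.lt_succ_of_lt hi
      simp [hext, hres, hi', hi.le]
    rw [h2] at h1
    exact h1

noncomputable def seqF (A : ℕ → Set G) (hA : ∀ n, IsClosed (A n))
    (hAi : ∀ n, interior (A n) = ∅) :
    ∀ n : ℕ, {F : (ℕ → Bool) → Set G // GoodN A n F}
  | 0 => ⟨(level0_exists A).choose, (level0_exists A).choose_spec⟩
  | n + 1 =>
    ⟨(step_exists A hA hAi n (seqF A hA hAi n).1 (seqF A hA hAi n).2).choose,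
     (step_exists A hA hAi n (seqF A hA hAi n).1 (seqF A hA hAi n).2).choose_spec.1⟩

lemma seqF_link (A : ℕ → Set G) (hA : ∀ n, IsClosed (A n))
    (hAi : ∀ n, interior (A n) = ∅) (n : ℕ) (b : ℕ → Bool) :
    closure ((seqF A hA hAi (n + 1)).1 b) ⊆ (seqF A hA hAi n).1 b := by
  have := (step_exists A hA hAi n (seqF A hA hAi n).1 (seqF A hA hAi n).2).choose_spec.2 b
  simpa [seqF] using this

lemma exists_branch_points (A : ℕ → Set G) (hA : ∀ n, IsClosed (A n))
    (hAi : ∀ n, interior (A n) = ∅) (hmono : Monotone A) :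
    ∃ x : (ℕ → Bool) → G, ∀ b b', b ≠ b' → (x b)⁻¹ * x b' ∉ ⋃ n, A n := by
  classical
  set S := seqF A hA hAi with hS
  have hnon : ∀ b : ℕ → Bool, (⋂ n, closure ((S n).1 b)).Nonempty := by
    intro b
    apply IsCompact.nonempty_iInter_of_sequence_nonempty_isCompact_isClosed
    · intro n
      exact (seqF_link A hA hAi n b).trans subset_closure
    · intro n
      exact ((S n).2.2.1 b).closure
    · exact (S 0).2.2.2.1 b
    · intro n
      exact isClosed_closure
  choose x hx using hnon
  refine ⟨x, ?_⟩
  intro b b' hbb'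
  obtain ⟨i, hi⟩ := Function.ne_iff.1 hbb'
  rw [mem_iUnion]
  rintro ⟨n, hn⟩
  set m := max n (i + 1) with hm
  have hnm : A n ⊆ A m := hmono (le_max_left _ _)
  have him : i < m := lt_of_lt_of_le (Nat.lt_succ_self i) (le_max_right _ _)
  have hxb : x b ∈ closure ((S m).1 b) := mem_iInter.1 (hx b) m
  have hxb' : x b' ∈ closure ((S m).1 b') := mem_iInter.1 (hx b') m
  exact (S m).2.2.2.2.2 b b' ⟨i, him, hi⟩ (x b) hxb (x b') hxb' (hnm hn)
end AUX3
end CGT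
namespace CGT
section AUX4
variable {G : Type*} [TopologicalSpace G] [Group G] [IsTopologicalGroup G]

lemma pow_succ_inv {V : Set G} (hsymm : V⁻¹ = V) (n : ℕ) : (V ^ (n + 1))⁻¹ = V ^ (n + 1) := by
  rw [← inv_pow, hsymm]

lemma pow_succ_mono {V : Set G} (h1 : (1 : G) ∈ V) (n : ℕ) : V ^ (n + 1) ⊆ V ^ (n + 2) := by
  intro x hx
  rw [pow_succ]
  exact ⟨x, hx, 1, h1, mul_one x⟩

lemma mem_pow_one {V : Set G} (h1 : (1 : G) ∈ V) : (1 : G) ∈ V ^ 1 := by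
  rw [pow_one]; exact h1

lemma union_pow_eq_closure {V : Set G} (h1 : (1 : G) ∈ V) (hsymm : V⁻¹ = V) :
    (Subgroup.closure V : Set G) = ⋃ n : ℕ, V ^ (n + 1) := by
  apply Subset.antisymm
  · set U : Subgroup G :=
      { carrier := ⋃ n : ℕ, V ^ (n + 1)
        one_mem' := mem_iUnion.2 ⟨0, mem_pow_one h1⟩
        mul_mem' := by
          rintro a b ha hb
          obtain ⟨m, hm⟩ := mem_iUnion.1 ha
          obtain ⟨k, hk⟩ := mem_iUnion.1 hb
          refine mem_iUnion.2 ⟨m + k + 1, ?_⟩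
          have : V ^ (m + k + 2) = V ^ (m + 1) * V ^ (k + 1) := by
            rw [← pow_add]; ring_nf
          rw [this]
          exact Set.mul_mem_mul hm hk
        inv_mem' := by
          rintro a ha
          obtain ⟨m, hm⟩ := mem_iUnion.1 ha
          refine mem_iUnion.2 ⟨m, ?_⟩
          rw [← pow_succ_inv hsymm m]
          exact Set.inv_mem_inv.2 hm } with hU
    have : Subgroup.closure V ≤ U := (Subgroup.closure_le U).2 (by
      intro v hv
      exact mem_iUnion.2 ⟨0, by rw [pow_one]; exact hv⟩)
    exact this
  · refine iUnion_subset fun n => ?_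
    induction n with
    | zero =>
        rw [pow_one]
        exact Subgroup.subset_closure
    | succ n ih =>
        rw [pow_succ]
        rintro x ⟨a, ha, b, hb, rfl⟩
        exact mul_mem (ih ha) (Subgroup.subset_closure hb)

lemma isCompact_pow {V : Set G} (h : IsCompact V) (n : ℕ) : IsCompact (V ^ (n + 1)) := by
  induction n with
  | zero => rw [pow_one]; exact h
  | succ n ih => rw [pow_succ]; exact ih.mul h

lemma mapsTo_pow {H : Type*} [Group H] (φ : G →* H) {V : Set G} {L : Set H}
    (h : ∀ g ∈ V, φ g ∈ L) (n : ℕ) : ∀ g ∈ V ^ (n + 1), φ g ∈ L ^ (n + 1) := by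
  induction n with
  | zero => intro g hg; rw [pow_one] at *; exact h g hg
  | succ n ih =>
      intro g hg
      rw [pow_succ] at hg
      obtain ⟨a, ha, b, hb, rfl⟩ := hg
      rw [pow_succ, map_mul]
      exact Set.mul_mem_mul (ih a ha) (h b hb)

lemma continuousOn_of_graph_closed {X Y : Type*} [TopologicalSpace X] [TopologicalSpace Y]
    [T2Space X] {f : X → Y} (hgraph : IsClosed {p : X × Y | p.2 = f p.1})
    {N : Set X} {M : Set Y} (hN : IsCompact N) (hM : IsCompact M)
    (hmaps : ∀ x ∈ N, f x ∈ M) : ContinuousOn f N := by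
  rw [continuousOn_iff_isClosed]
  intro t ht
  refine ⟨Prod.fst '' ({p : X × Y | p.2 = f p.1} ∩ N ×ˢ (M ∩ t)), ?_, ?_⟩
  · have hc : IsCompact ({p : X × Y | p.2 = f p.1} ∩ N ×ˢ (M ∩ t)) :=
      (hN.prod (hM.inter_right ht)).inter_left hgraph
    exact (hc.image continuous_fst).isClosed
  · ext x
    constructor
    · rintro ⟨hxt, hxN⟩
      exact ⟨⟨(x, f x), ⟨rfl, mk_mem_prod hxN ⟨hmaps x hxN, hxt⟩⟩, rfl⟩, hxN⟩
    · rintro ⟨⟨p, ⟨hp, _hpN, _hpM, hpt⟩, rfl⟩, hxN⟩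
      refine ⟨?_, hxN⟩
      show f p.1 ∈ t
      rw [← hp]
      exact hpt

lemma continuous_of_continuousAt_point {H : Type*} [TopologicalSpace H] [Group H]
    [IsTopologicalGroup H] (φ : G →* H) {x : G} (h : ContinuousAt φ x) : Continuous φ := by
  apply continuous_of_continuousAt_one φ
  have hx : ContinuousAt (fun g : G => x * g) 1 := (continuous_mul_left x).continuousAt
  have hφx : ContinuousAt φ ((fun g : G => x * g) 1) := by simpa using h
  have h2 : ContinuousAt (fun g : G => φ (x * g)) 1 := hφx.comp hx
  have h1 : ContinuousAt (fun g : G => (φ x)⁻¹ * φ (x * g)) 1 := continuousAt_const.mul h2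
  have heq : (fun g : G => (φ x)⁻¹ * φ (x * g)) = φ := funext fun g => by
    rw [map_mul, ← mul_assoc, inv_mul_cancel, one_mul]
  rw [← heq]
  exact h1
end AUX4
end CGT
namespace CGT

lemma finite_image_quotient {Γ : Type*} [Group Γ] [TopologicalSpace Γ] [IsTopologicalGroup Γ]
    (Γ₁ : Subgroup Γ) (hΓ₁ : IsOpen (Γ₁ : Set Γ)) {D : Set Γ} (hD : IsCompact D) :
    (QuotientGroup.mk '' D : Set (Γ ⧸ Γ₁)).Finite := by
  classical
  have hopen : ∀ t : Γ ⧸ Γ₁, IsOpen (QuotientGroup.mk ⁻¹' {t} : Set Γ) := by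
    intro t
    induction t using QuotientGroup.induction_on with
    | H d =>
      have : (QuotientGroup.mk ⁻¹' {(d : Γ ⧸ Γ₁)} : Set Γ) =
          (fun g => d⁻¹ * g) ⁻¹' (Γ₁ : Set Γ) := by
        ext g
        simp only [mem_preimage, mem_singleton_iff, SetLike.mem_coe]
        rw [QuotientGroup.eq]
        constructor
        · intro h
          have := Γ₁.inv_mem h
          simpa using this
        · intro h
          have := Γ₁.inv_mem h
          simpa using this
      rw [this]
      exact hΓ₁.preimage (continuous_mul_left d⁻¹)
  have hcover : D ⊆ ⋃ t : Γ ⧸ Γ₁, QuotientGroup.mk ⁻¹' {t} := by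
    intro g _
    exact mem_iUnion.2 ⟨QuotientGroup.mk g, rfl⟩
  obtain ⟨s, hs⟩ := hD.elim_finite_subcover _ hopen hcover
  apply Set.Finite.subset s.finite_toSet
  rintro t ⟨d, hd, rfl⟩
  obtain ⟨u, hu, hdu⟩ := mem_iUnion₂.1 (hs hd)
  rw [mem_preimage, mem_singleton_iff] at hdu
  rw [hdu]
  exact hu
end CGT
theorem closed_graph_theorem
    {G : Type*} [TopologicalSpace G] [Group G] [IsTopologicalGroup G]
    [LocallyCompactSpace G] [T2Space G]
    {H : Type*} [TopologicalSpace H] [Group H] [IsTopologicalGroup H]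
    [LocallyCompactSpace H] [T2Space H]
    (hG : SigmaCompactLtContinuum G) (hH : SigmaCompactLtContinuum H)
    (φ : G →* H) :
    Continuous φ ↔ IsClosed {p : G × H | p.2 = φ p.1} := by
  constructor
  · intro hφ
    exact isClosed_eq continuous_snd (hφ.comp continuous_fst)
  intro hc
  classical
  -- compact symmetric neighborhoods of the identity
  obtain ⟨K₀, hK₀c, hK₀n⟩ := exists_compact_mem_nhds (1 : G)
  obtain ⟨L₀, hL₀c, hL₀n⟩ := exists_compact_mem_nhds (1 : H)
  set K : Set G := K₀ ∩ K₀⁻¹ with hKdef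
  set L : Set H := L₀ ∩ L₀⁻¹ with hLdef
  have hKc : IsCompact K := hK₀c.inter_right hK₀c.isClosed.inv
  have hLc : IsCompact L := hL₀c.inter_right hL₀c.isClosed.inv
  have hKinv : K⁻¹ = K := by
    rw [hKdef, Set.inter_inv, inv_inv, Set.inter_comm]
  have hLinv : L⁻¹ = L := by
    rw [hLdef, Set.inter_inv, inv_inv, Set.inter_comm]
  have hKn : K ∈ 𝓝 (1 : G) := by
    refine Filter.inter_mem hK₀n ?_
    have h := (continuous_inv (G := G)).continuousAt (x := 1)
    have := h.preimage_mem_nhds (by simpa using hK₀n)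
    simpa [Set.inv_preimage] using this
  have hLn : L ∈ 𝓝 (1 : H) := by
    refine Filter.inter_mem hL₀n ?_
    have h := (continuous_inv (G := H)).continuousAt (x := 1)
    have := h.preimage_mem_nhds (by simpa using hL₀n)
    simpa [Set.inv_preimage] using this
  -- the basic compact set V
  set V : Set G := K ∩ φ ⁻¹' L with hVdef
  have h1V : (1 : G) ∈ V := ⟨mem_of_mem_nhds hKn, by
    simp only [Set.mem_preimage, map_one]; exact mem_of_mem_nhds hLn⟩
  have hVinv : V⁻¹ = V := by
    have hpre : (φ ⁻¹' L)⁻¹ = φ ⁻¹' L := by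
      ext x
      simp only [Set.mem_inv, Set.mem_preimage, map_inv]
      rw [← Set.mem_inv, hLinv]
    rw [hVdef, Set.inter_inv, hKinv, hpre]
  have hVc : IsCompact V := by
    have himg : V = Prod.fst '' ({p : G × H | p.2 = φ p.1} ∩ K ×ˢ L) := by
      ext g
      constructor
      · intro hg
        exact ⟨(g, φ g), ⟨rfl, hg.1, hg.2⟩, rfl⟩
      · rintro ⟨p, ⟨hp, hpK, hpL⟩, rfl⟩
        refine ⟨hpK, ?_⟩
        show φ p.1 ∈ L
        rw [← hp]; exact hpL
    rw [himg]
    exact (((hKc.prod hLc).inter_left hc).image continuous_fst)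
  -- the graph as a subgroup of G × H
  set Γ : Subgroup (G × H) :=
    { carrier := {p : G × H | p.2 = φ p.1}
      one_mem' := by simp
      mul_mem' := by
        rintro p q hp hq
        simp only [Set.mem_setOf_eq] at *
        rw [Prod.snd_mul, Prod.fst_mul, map_mul, hp, hq]
      inv_mem' := by
        rintro p hp
        simp only [Set.mem_setOf_eq] at *
        rw [Prod.snd_inv, Prod.fst_inv, map_inv, hp] } with hΓdef
  -- the compact neighborhood of 1 in Γ
  set C : Set ↥Γ := (fun p : ↥Γ => (p : G × H)) ⁻¹' (K ×ˢ L) with hCdef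
  have hCn : C ∈ 𝓝 (1 : ↥Γ) := by
    apply (continuous_subtype_val.continuousAt).preimage_mem_nhds
    exact prod_mem_nhds hKn hLn
  -- the open subgroup Γ₁ generated by C
  set Γ₁ : Subgroup ↥Γ := Subgroup.closure C with hΓ₁def
  have hΓ₁o : IsOpen (Γ₁ : Set ↥Γ) :=
    Subgroup.isOpen_of_mem_nhds Γ₁ (Filter.mem_of_superset hCn Subgroup.subset_closure)
  -- the group isomorphism between Γ and G
  set e : ↥Γ ≃* G :=
    { toFun := fun p => (p : G × H).1
      invFun := fun g => ⟨(g, φ g), rfl⟩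
      left_inv := by
        rintro ⟨⟨g, h⟩, hp⟩
        have hp' : h = φ g := hp
        subst hp'
        rfl
      right_inv := fun g => rfl
      map_mul' := fun p q => rfl } with hedef
  -- e maps Γ₁ onto the subgroup generated by V
  have himgCV : (fun p : ↥Γ => (p : G × H).1) '' C = V := by
    ext g
    constructor
    · rintro ⟨p, hp, rfl⟩
      obtain ⟨hpK, hpL⟩ := hp
      refine ⟨hpK, ?_⟩
      show φ (p : G × H).1 ∈ L
      rw [← p.2]
      exact hpL
    · intro hg
      exact ⟨⟨(g, φ g), rfl⟩, ⟨hg.1, hg.2⟩, rfl⟩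
  have hmap : Subgroup.map e.toMonoidHom Γ₁ = Subgroup.closure V := by
    rw [hΓ₁def, MonoidHom.map_closure]
    exact congrArg Subgroup.closure himgCV
  -- the coset of an element in terms of V-powers
  have hSuni : (Subgroup.closure V : Set G) = ⋃ n : ℕ, V ^ (n + 1) :=
    CGT.union_pow_eq_closure h1V hVinv
  -- Cardinality upper bound for the coset space of Γ₁
  obtain ⟨𝒦, h𝒦card, h𝒦cpt, h𝒦uni⟩ := hG
  obtain ⟨ℒ, hℒcard, hℒcpt, hℒuni⟩ := hH
  have hQcard : Cardinal.mk (↥Γ ⧸ Γ₁) < Cardinal.continuum := by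
    set D : ↥𝒦 × ↥ℒ → Set ↥Γ :=
      fun p => (fun q : ↥Γ => (q : G × H)) ⁻¹' ((p.1 : Set G) ×ˢ (p.2 : Set H)) with hDdef
    have hDc : ∀ p, IsCompact (D p) := by
      intro p
      rw [Subtype.isCompact_iff]
      have : (fun q : ↥Γ => (q : G × H)) '' (D p) =
          ((p.1 : Set G) ×ˢ (p.2 : Set H)) ∩ (Γ : Set (G × H)) := by
        have hrange : (Set.range fun q : ↥Γ => (q : G × H)) = (Γ : Set (G × H)) :=
          Subtype.range_coe
        rw [hDdef, Set.image_preimage_eq_inter_range, hrange]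
      rw [this]
      exact ((h𝒦cpt _ p.1.2).prod (hℒcpt _ p.2.2)).inter_right hc
    have hDcover : (univ : Set (↥Γ ⧸ Γ₁)) = ⋃ p, QuotientGroup.mk '' (D p) := by
      apply Subset.antisymm
      · rintro q -
        induction q using QuotientGroup.induction_on with
        | H γ =>
          have h1 : (γ : G × H).1 ∈ ⋃₀ 𝒦 := by rw [h𝒦uni]; trivial
          have h2 : (γ : G × H).2 ∈ ⋃₀ ℒ := by rw [hℒuni]; trivial
          obtain ⟨K', hK', hγK⟩ := h1
          obtain ⟨L', hL', hγL⟩ := h2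
          exact mem_iUnion.2 ⟨(⟨K', hK'⟩, ⟨L', hL'⟩), γ, ⟨hγK, hγL⟩, rfl⟩
      · exact subset_univ _
    have hb : Cardinal.mk (↥Γ ⧸ Γ₁) =
        Cardinal.mk ↥(⋃ p, (QuotientGroup.mk '' (D p) : Set (↥Γ ⧸ Γ₁))) := by
      rw [← hDcover, Cardinal.mk_univ]
    rw [hb]
    have hle := Cardinal.mk_iUnion_le (fun p => (QuotientGroup.mk '' (D p) : Set (↥Γ ⧸ Γ₁)))
    have hsup : (⨆ p, Cardinal.mk ↥(QuotientGroup.mk '' (D p) : Set (↥Γ ⧸ Γ₁))) ≤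
        Cardinal.aleph0 := by
      apply ciSup_le'
      intro p
      have hfin := CGT.finite_image_quotient Γ₁ hΓ₁o (hDc p)
      rw [Cardinal.mk_le_aleph0_iff]
      exact Set.countable_coe_iff.2 hfin.countable
    have hι : Cardinal.mk (↥𝒦 × ↥ℒ) < Cardinal.continuum := by
      rw [Cardinal.mk_prod]
      apply Cardinal.mul_lt_of_lt Cardinal.aleph0_le_continuum
      · exact Cardinal.lift_lt_continuum.2 h𝒦card
      · exact Cardinal.lift_lt_continuum.2 hℒcard
    calc Cardinal.mk ↥(⋃ p, (QuotientGroup.mk '' (D p) : Set (↥Γ ⧸ Γ₁)))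
        ≤ Cardinal.mk (↥𝒦 × ↥ℒ) *
          ⨆ p, Cardinal.mk ↥(QuotientGroup.mk '' (D p) : Set (↥Γ ⧸ Γ₁)) := hle
      _ ≤ Cardinal.mk (↥𝒦 × ↥ℒ) * Cardinal.aleph0 := by
          exact mul_le_mul_right hsup _
      _ < Cardinal.continuum :=
          Cardinal.mul_lt_of_lt Cardinal.aleph0_le_continuum hι Cardinal.aleph0_lt_continuum
  -- main case distinction
  by_cases hint : ∃ n : ℕ, (interior (V ^ (n + 1))).Nonempty
  · -- some power of V has nonempty interior: continuity follows
    obtain ⟨n, x, hx⟩ := hint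
    have hcont : ContinuousOn φ (V ^ (n + 1)) :=
      CGT.continuousOn_of_graph_closed hc (CGT.isCompact_pow hVc n) (CGT.isCompact_pow hLc n)
        (CGT.mapsTo_pow φ (fun g hg => hg.2) n)
    have hat : ContinuousAt φ x :=
      hcont.continuousAt (mem_interior_iff_mem_nhds.1 hx)
    exact CGT.continuous_of_continuousAt_point φ hat
  · -- otherwise the coset space has at least continuum many elements: contradiction
    exfalso
    push_neg at hint
    have hAi : ∀ n : ℕ, interior (V ^ (n + 1)) = ∅ := hint
    have hAcl : ∀ n : ℕ, IsClosed (V ^ (n + 1)) := fun n => (CGT.isCompact_pow hVc n).isClosed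
    have hmono : Monotone (fun n : ℕ => V ^ (n + 1)) :=
      monotone_nat_of_le_succ (fun n => CGT.pow_succ_mono h1V n)
    obtain ⟨x, hx⟩ := CGT.exists_branch_points (fun n : ℕ => V ^ (n + 1)) hAcl hAi hmono
    -- map branches to cosets
    set y : (ℕ → Bool) → (↥Γ ⧸ Γ₁) := fun b => QuotientGroup.mk (e.symm (x b)) with hydef
    have hyinj : Function.Injective y := by
      intro b b' hbb'
      by_contra hne
      rw [hydef] at hbb'
      simp only at hbb'
      rw [QuotientGroup.eq] at hbb'
      have hmem : e ((e.symm (x b))⁻¹ * e.symm (x b')) ∈ Subgroup.map e.toMonoidHom Γ₁ :=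
        ⟨_, hbb', rfl⟩
      rw [hmap] at hmem
      have : (x b)⁻¹ * x b' ∈ (Subgroup.closure V : Set G) := by
        have he : e ((e.symm (x b))⁻¹ * e.symm (x b')) = (x b)⁻¹ * x b' := by
          rw [map_mul, map_inv, MulEquiv.apply_symm_apply, MulEquiv.apply_symm_apply]
        rw [← he]
        exact hmem
      rw [hSuni] at this
      exact hx b b' hne this
    have hcard : Cardinal.continuum ≤ Cardinal.mk (↥Γ ⧸ Γ₁) := by
      have hle := Cardinal.lift_mk_le'.2 ⟨⟨y, hyinj⟩⟩
      rw [Cardinal.mk_arrow, Cardinal.mk_bool, Cardinal.mk_nat, Cardinal.lift_aleph0,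
        Cardinal.lift_ofNat, Cardinal.two_power_aleph0, Cardinal.lift_continuum,
        Cardinal.lift_uzero] at hle
      exact hle
    exact absurd hQcard (not_lt.2 hcard)
end
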